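/- arXiv:1801.08203 — 6 statements merged into one kernel-verified Lean document; each statement's English description precedes it below -/
import Mathlib

section
/- For every n ≥ 2 and every nonzero real number t₀, the image of the Burau specialization Sⁿ_{t₀} : Bₙ → GL_{n-1}(ℝ) is isomorphic as a group to the image of Sⁿ_{t₀⁻¹}; in particular, Sⁿ_{t₀} is injective if and only if Sⁿ_{t₀⁻¹} is injective. -/
open Matrix
open scoped MatrixGroups

/-- The braid relations on `m` generators. -/
def braidRels (m : ℕ) : Set (FreeGroup (Fin m)) :=
  { r | (∃ i j : Fin m, (i : ℕ) + 1 = (j : ℕ) ∧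
          r = FreeGroup.of i * FreeGroup.of j * FreeGroup.of i *
              (FreeGroup.of j * FreeGroup.of i * FreeGroup.of j)⁻¹) ∨
        (∃ i j : Fin m, (i : ℕ) + 2 ≤ (j : ℕ) ∧
          r = FreeGroup.of i * FreeGroup.of j * (FreeGroup.of j * FreeGroup.of i)⁻¹) }

/-- The braid group on `n` strands, presented by `n-1` generators and the braid relations. -/
abbrev BraidGroup (n : ℕ) : Type := PresentedGroup (braidRels (n - 1))

/-- The `i`-th Burau matrix of size `m × m` at the parameter `t`: it agrees with the
identity matrix except in row `i`, where the `(i, i-1)` entry is `t` (when it exists),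
the `(i, i)` entry is `-t`, and the `(i, i+1)` entry is `1` (when it exists). -/
def burauMat (m : ℕ) (t : ℝ) (i : Fin m) : Matrix (Fin m) (Fin m) ℝ :=
  fun r c =>
    if r = i then
      if (c : ℕ) + 1 = (i : ℕ) then t
      else if c = i then -t
      else if (c : ℕ) = (i : ℕ) + 1 then 1
      else 0
    else if r = c then 1 else 0

/-- `S` is the Burau specialization of the braid group `Bₙ` at the real parameter `t`. -/
def IsBurauSpec (n : ℕ) (t : ℝ) (S : BraidGroup n →* GL (Fin (n - 1)) ℝ) : Prop :=
  ∀ i : Fin (n - 1),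
    (S (PresentedGroup.of i) : Matrix (Fin (n - 1)) (Fin (n - 1)) ℝ) = burauMat (n - 1) t i

-- auxiliary
lemma braid_rel_one {m : ℕ} {r : FreeGroup (Fin m)} (hr : r ∈ braidRels m) :
    PresentedGroup.mk (braidRels m) r = 1 :=
  (QuotientGroup.eq_one_iff r).2 (Subgroup.subset_normalClosure hr)

lemma braid_rels_inv_ok (m : ℕ) : ∀ r ∈ braidRels m,
    FreeGroup.lift (fun i : Fin m => (PresentedGroup.of (rels := braidRels m) i)⁻¹) r = 1 := by
  intro r hr
  have hmk : ∀ x : Fin m, PresentedGroup.mk (braidRels m) (FreeGroup.of x)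
      = PresentedGroup.of (rels := braidRels m) x := fun _ => rfl
  rcases hr with ⟨i, j, hij, rfl⟩ | ⟨i, j, hij, rfl⟩
  · have h1 := braid_rel_one (m := m) (Or.inl ⟨i, j, hij, rfl⟩)
    simp only [_root_.map_mul, _root_.map_inv, hmk, mul_inv_eq_one] at h1
    simp only [_root_.map_mul, _root_.map_inv, FreeGroup.lift_apply_of, mul_inv_eq_one]
    have := congrArg Inv.inv h1
    simpa [_root_.mul_inv_rev, mul_assoc] using this
  · have h1 := braid_rel_one (m := m) (Or.inr ⟨i, j, hij, rfl⟩)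
    simp only [_root_.map_mul, _root_.map_inv, hmk, mul_inv_eq_one] at h1
    simp only [_root_.map_mul, _root_.map_inv, FreeGroup.lift_apply_of, mul_inv_eq_one]
    have := congrArg Inv.inv h1
    simpa [_root_.mul_inv_rev, mul_assoc] using this.symm

/-- The automorphism-candidate of the braid group sending each generator to its inverse. -/
def invoHom (m : ℕ) : PresentedGroup (braidRels m) →* PresentedGroup (braidRels m) :=
  PresentedGroup.toGroup (braid_rels_inv_ok m)

@[simp] lemma invoHom_of (m : ℕ) (i : Fin m) :
    invoHom m (PresentedGroup.of i) = (PresentedGroup.of i)⁻¹ :=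
  PresentedGroup.toGroup.of _

lemma invoHom_invoHom (m : ℕ) (x : PresentedGroup (braidRels m)) :
    invoHom m (invoHom m x) = x := by
  have h : (invoHom m).comp (invoHom m) = MonoidHom.id _ := by
    ext i
    simp
  exact DFunLike.congr_fun h x

lemma burau_key (m : ℕ) (t : ℝ) (ht : t ≠ 0) (i : Fin m) :
    burauMat m t⁻¹ i * Matrix.diagonal (fun j : Fin m => t⁻¹ ^ (j : ℕ)) * burauMat m t i
      = Matrix.diagonal (fun j : Fin m => t⁻¹ ^ (j : ℕ)) := by
  ext r c
  rw [Matrix.mul_apply, Matrix.diagonal_apply]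
  simp only [Matrix.mul_diagonal]
  by_cases hr : r = i
  · subst hr
    set w : ℝ := if (c : ℕ) + 1 = (r : ℕ) then t else if c = r then -t
      else if (c : ℕ) = (r : ℕ) + 1 then 1 else 0 with hw
    have hB : ∀ k : Fin m, burauMat m t r k c =
        (if k = r then w else 0) + (if k = c then (if c = r then 0 else 1) else 0) := by
      intro k
      by_cases h1 : k = r
      · subst h1
        have h0 : (if k = c then (if c = k then 0 else 1) else (0:ℝ)) = 0 := by
          by_cases h : k = c
          · subst h; simp
          · simp [h]
        rw [if_pos rfl, h0, add_zero, hw]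
        simp [burauMat]
      · by_cases h2 : k = c
        · subst h2; simp [burauMat, h1, Ne.symm h1]
        · simp [burauMat, h1, h2]
    simp only [hB, mul_add, Finset.sum_add_distrib, mul_ite, mul_zero,
      Finset.sum_ite_eq', Finset.mem_univ, if_true]
    have hAii : burauMat m t⁻¹ r r r = -t⁻¹ := by simp [burauMat]
    rw [hAii]
    by_cases h1 : (c : ℕ) + 1 = (r : ℕ)
    · have hcr : c ≠ r := by intro h; subst h; omega
      have hAic : burauMat m t⁻¹ r r c = t⁻¹ := by simp [burauMat, h1]
      have hwv : w = t := by rw [hw, if_pos h1]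
      have hpow : t⁻¹ ^ (r : ℕ) = t⁻¹ ^ (c : ℕ) * t⁻¹ := by rw [← h1, pow_succ]
      rw [hwv, hAic, hpow, if_neg hcr, if_neg (Ne.symm hcr)]
      field_simp
      ring
    · by_cases h2 : c = r
      · subst h2
        have hAic : burauMat m t⁻¹ c c c = -t⁻¹ := by simp [burauMat]
        have hwv : w = -t := by rw [hw, if_neg h1, if_pos rfl]
        rw [hwv, hAic]
        simp only [if_pos rfl, mul_zero, add_zero]
        field_simp
        simp
      · by_cases h3 : (c : ℕ) = (r : ℕ) + 1
        · have hAic : burauMat m t⁻¹ r r c = 1 := by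
            simp only [burauMat, if_pos rfl]
            rw [if_neg h1, if_neg h2, if_pos h3]
            simp
          have hwv : w = 1 := by rw [hw, if_neg h1, if_neg h2, if_pos h3]
          have hpow : t⁻¹ ^ (c : ℕ) = t⁻¹ ^ (r : ℕ) * t⁻¹ := by rw [h3, pow_succ]
          rw [hwv, hAic, hpow, if_neg h2, if_neg (Ne.symm h2)]
          ring
        · have hAic : burauMat m t⁻¹ r r c = 0 := by
            simp only [burauMat, if_pos rfl]
            rw [if_neg h1, if_neg h2, if_neg h3]
            simp
          have hwv : w = 0 := by rw [hw, if_neg h1, if_neg h2, if_neg h3]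
          rw [hwv, hAic, if_neg h2, if_neg (Ne.symm h2)]
          ring
  · have hA : ∀ k : Fin m, burauMat m t⁻¹ i r k = if r = k then 1 else 0 := by
      intro k; simp [burauMat, hr]
    simp only [hA, ite_mul, one_mul, zero_mul, Finset.sum_ite_eq, Finset.mem_univ, if_true]
    by_cases h2 : r = c
    · subst h2; simp [burauMat, hr]
    · simp [burauMat, hr, h2]

theorem burau_image_iso_of_inv_param (n : ℕ) (hn : 2 ≤ n) (t₀ : ℝ) (ht : t₀ ≠ 0)
    (S₁ S₂ : BraidGroup n →* GL (Fin (n - 1)) ℝ)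
    (h₁ : IsBurauSpec n t₀ S₁) (h₂ : IsBurauSpec n t₀⁻¹ S₂) :
    Nonempty (↥S₁.range ≃* ↥S₂.range) ∧
      (Function.Injective S₁ ↔ Function.Injective S₂) := by
  set m := n - 1 with hm
  set d : Fin m → ℝ := fun j => t₀⁻¹ ^ (j : ℕ) with hd
  set e : Fin m → ℝ := fun j => t₀ ^ (j : ℕ) with he
  have hde : (fun j => d j * e j) = fun _ : Fin m => (1:ℝ) := by
    funext j; simp only [hd, he, ← mul_pow, inv_mul_cancel₀ ht, one_pow]
  have hed : (fun j => e j * d j) = fun _ : Fin m => (1:ℝ) := by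
    funext j; simp only [hd, he, ← mul_pow, mul_inv_cancel₀ ht, one_pow]
  set Dg : GL (Fin m) ℝ :=
    ⟨Matrix.diagonal d, Matrix.diagonal e,
      by rw [Matrix.diagonal_mul_diagonal]; rw [show (fun j => d j * e j) = _ from hde]; exact Matrix.diagonal_one,
      by rw [Matrix.diagonal_mul_diagonal]; rw [show (fun j => e j * d j) = _ from hed]; exact Matrix.diagonal_one⟩
    with hDg
  set ψ : GL (Fin m) ℝ ≃* GL (Fin m) ℝ := MulAut.conj Dg with hψ
  have heq : S₂ = (ψ.toMonoidHom).comp (S₁.comp (invoHom m)) := by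
    apply PresentedGroup.ext
    intro i
    simp only [MonoidHom.comp_apply, MulEquiv.coe_toMonoidHom, invoHom_of, map_inv, hψ,
      MulAut.conj_apply]
    have hkey : S₂ (PresentedGroup.of i) * Dg * S₁ (PresentedGroup.of i) = Dg := by
      apply Units.ext
      rw [Units.val_mul, Units.val_mul]
      have hv : (Dg : Matrix (Fin m) (Fin m) ℝ) = Matrix.diagonal d := rfl
      rw [hv, h₂ i, h₁ i]
      exact burau_key m t₀ ht i
    have hgrp : (Dg * S₁ (PresentedGroup.of i) * Dg⁻¹)⁻¹
        = Dg * (S₁ (PresentedGroup.of i))⁻¹ * Dg⁻¹ := by group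
    rw [hgrp, eq_mul_inv_iff_mul_eq, eq_mul_inv_iff_mul_eq]
    exact hkey
  have hsurj : Function.Surjective (invoHom m) := fun x => ⟨invoHom m x, invoHom_invoHom m x⟩
  have hinj : Function.Injective (invoHom m) :=
    Function.LeftInverse.injective (invoHom_invoHom m)
  have hrange : S₂.range = S₁.range.map (ψ : GL (Fin m) ℝ →* GL (Fin m) ℝ) := by
    rw [heq, MonoidHom.range_comp]
    congr 1
    rw [MonoidHom.range_comp, MonoidHom.range_eq_top.2 hsurj, ← MonoidHom.range_eq_map]
  constructor
  · exact ⟨(MulEquiv.subgroupMap ψ S₁.range).trans (MulEquiv.subgroupCongr hrange.symm)⟩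
  · have hpt : ∀ x, S₂ x = ψ (S₁ (invoHom m x)) := fun x => by rw [heq]; rfl
    constructor
    · intro hS1 a b hab
      rw [hpt, hpt] at hab
      exact hinj (hS1 (ψ.injective hab))
    · intro hS2 a b hab
      have : S₂ (invoHom m a) = S₂ (invoHom m b) := by
        rw [hpt, hpt, invoHom_invoHom, invoHom_invoHom, hab]
      have := hS2 this
      calc a = invoHom m (invoHom m a) := (invoHom_invoHom m a).symm
        _ = invoHom m (invoHom m b) := by rw [this]
        _ = b := invoHom_invoHom m b
end

section
/- Let t₀ be a real number with t₀ ∉ {0, 1, -1}. If the restriction of the Burau specialization S_{t₀} : B₃ → GL₂(ℝ) to the subgroup N is injective, then S_{t₀} is injective on all of B₃. -/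
open Matrix
open scoped MatrixGroups

/-- The braid group on three strands. -/
abbrev B3 : Type := BraidGroup 3

/-- The standard generators of `B3`. -/
def b3 (i : Fin 2) : B3 := PresentedGroup.of i

/-- `S` is the Burau specialization of `B3` at the real parameter `t₀`. -/
def IsBurau3 (t₀ : ℝ) (S : B3 →* GL (Fin 2) ℝ) : Prop :=
  (S (b3 0) : Matrix (Fin 2) (Fin 2) ℝ) = !![-t₀, 1; 0, 1] ∧
  (S (b3 1) : Matrix (Fin 2) (Fin 2) ℝ) = !![1, 0; t₀, -t₀]

/-- The element `a₁ = σ₁⁻¹σ₂` of `B3`. -/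
def a₁ : B3 := (b3 0)⁻¹ * b3 1

/-- The element `a₂ = σ₂σ₁⁻¹` of `B3`. -/
def a₂ : B3 := b3 1 * (b3 0)⁻¹

/-- The (normal) subgroup `N` of `B3` generated by `a₁` and `a₂`. -/
def N3 : Subgroup B3 := Subgroup.closure {a₁, a₂}

private lemma braid_rel : b3 0 * b3 1 * b3 0 = b3 1 * b3 0 * b3 1 := by
  have h : PresentedGroup.mk (braidRels (3-1)) (FreeGroup.of 0 * FreeGroup.of 1 * FreeGroup.of 0 *
      (FreeGroup.of 1 * FreeGroup.of 0 * FreeGroup.of 1)⁻¹) = 1 := by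
    apply (QuotientGroup.eq_one_iff _).mpr
    exact Subgroup.subset_normalClosure (Or.inl ⟨0, 1, by decide, rfl⟩)
  simp only [_root_.map_mul, _root_.map_inv] at h
  exact mul_inv_eq_one.mp h

private lemma braid_rel_inv :
    (b3 0)⁻¹ * (b3 1)⁻¹ * (b3 0)⁻¹ = (b3 1)⁻¹ * (b3 0)⁻¹ * (b3 1)⁻¹ := by
  have h := congrArg Inv.inv braid_rel
  simpa [_root_.mul_inv_rev, mul_assoc] using h

private lemma ha₁ : a₁ ∈ N3 := Subgroup.subset_closure (by simp)
private lemma ha₂ : a₂ ∈ N3 := Subgroup.subset_closure (by simp)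

private lemma conj_x_a1 : b3 0 * a₁ * (b3 0)⁻¹ = a₂ := by unfold a₁ a₂; group

private lemma conj_xinv_a1 : (b3 0)⁻¹ * a₁ * b3 0 = a₁ * a₂⁻¹ := by
  have h : (b3 0)⁻¹ * a₁ * b3 0 = (b3 0)⁻¹ * (b3 0)⁻¹ * (b3 1 * b3 0 * b3 1) * (b3 1)⁻¹ := by
    unfold a₁; group
  rw [h, ← braid_rel]; unfold a₁ a₂; group

private lemma conj_y_a1 : b3 1 * a₁ * (b3 1)⁻¹ = a₂ := by unfold a₁ a₂; group

private lemma conj_yinv_a1 : (b3 1)⁻¹ * a₁ * b3 1 = a₂⁻¹ * a₁ := by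
  have h : a₂⁻¹ * a₁ = b3 0 * ((b3 1)⁻¹ * (b3 0)⁻¹ * (b3 1)⁻¹) * (b3 1 * b3 1) := by
    unfold a₁ a₂; group
  rw [h, ← braid_rel_inv]; unfold a₁; group

private lemma conj_x_a2 : b3 0 * a₂ * (b3 0)⁻¹ = a₁⁻¹ * a₂ := by
  have h : a₁⁻¹ * a₂ = (b3 1)⁻¹ * (b3 0 * b3 1 * b3 0) * ((b3 0)⁻¹ * (b3 0)⁻¹) := by
    unfold a₁ a₂; group
  rw [h, braid_rel]; unfold a₂; group

private lemma conj_xinv_a2 : (b3 0)⁻¹ * a₂ * b3 0 = a₁ := by unfold a₁ a₂; group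

private lemma conj_y_a2 : b3 1 * a₂ * (b3 1)⁻¹ = a₂ * a₁⁻¹ := by
  have h : b3 1 * a₂ * (b3 1)⁻¹ = b3 1 * b3 1 * ((b3 0)⁻¹ * (b3 1)⁻¹ * (b3 0)⁻¹) * b3 0 := by
    unfold a₂; group
  rw [h, braid_rel_inv]; unfold a₁ a₂; group

private lemma conj_yinv_a2 : (b3 1)⁻¹ * a₂ * b3 1 = a₁ := by unfold a₁ a₂; group

private lemma conj_N3 (g : B3) (h1 : g * a₁ * g⁻¹ ∈ N3) (h2 : g * a₂ * g⁻¹ ∈ N3) :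
    ∀ n ∈ N3, g * n * g⁻¹ ∈ N3 := by
  intro n hn
  induction hn using Subgroup.closure_induction with
  | mem x hx =>
    rcases hx with rfl | rfl
    · exact h1
    · exact h2
  | one => simpa using one_mem N3
  | mul x y hx hy ihx ihy =>
    have := mul_mem ihx ihy
    have e : g * (x * y) * g⁻¹ = (g * x * g⁻¹) * (g * y * g⁻¹) := by group
    rwa [e]
  | inv x hx ihx =>
    have := inv_mem ihx
    have e : g * x⁻¹ * g⁻¹ = (g * x * g⁻¹)⁻¹ := by group
    rwa [e]

private lemma gen0_mem_normalizer : b3 0 ∈ (Subgroup.normalizer (N3 : Set B3)) := by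
  rw [Subgroup.mem_normalizer_iff]
  intro h
  constructor
  · intro hh
    exact conj_N3 (b3 0) (conj_x_a1 ▸ ha₂) (conj_x_a2 ▸ mul_mem (inv_mem ha₁) ha₂) h hh
  · intro hh
    have := conj_N3 (b3 0)⁻¹ (by rw [inv_inv]; exact conj_xinv_a1 ▸ mul_mem ha₁ (inv_mem ha₂))
      (by rw [inv_inv]; exact conj_xinv_a2 ▸ ha₁) _ hh
    have e : (b3 0)⁻¹ * (b3 0 * h * (b3 0)⁻¹) * ((b3 0)⁻¹)⁻¹ = h := by group
    rwa [e] at this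

private lemma gen1_mem_normalizer : b3 1 ∈ (Subgroup.normalizer (N3 : Set B3)) := by
  rw [Subgroup.mem_normalizer_iff]
  intro h
  constructor
  · intro hh
    exact conj_N3 (b3 1) (conj_y_a1 ▸ ha₂) (conj_y_a2 ▸ mul_mem ha₂ (inv_mem ha₁)) h hh
  · intro hh
    have := conj_N3 (b3 1)⁻¹ (by rw [inv_inv]; exact conj_yinv_a1 ▸ mul_mem (inv_mem ha₂) ha₁)
      (by rw [inv_inv]; exact conj_yinv_a2 ▸ ha₁) _ hh
    have e : (b3 1)⁻¹ * (b3 1 * h * (b3 1)⁻¹) * ((b3 1)⁻¹)⁻¹ = h := by group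
    rwa [e] at this

private instance N3_normal : N3.Normal := by
  constructor
  intro n hn g
  have hg : g ∈ (Subgroup.normalizer (N3 : Set B3)) := by
    refine PresentedGroup.generated_by _ (Subgroup.normalizer (N3 : Set B3)) (fun j => ?_) g
    fin_cases j
    · exact gen0_mem_normalizer
    · exact gen1_mem_normalizer
  exact (Subgroup.mem_normalizer_iff.mp hg n).mp hn

private lemma braid_rels_lift :
    ∀ r ∈ braidRels (3-1),
      FreeGroup.lift (fun _ : Fin (3-1) => Multiplicative.ofAdd (1 : ℤ)) r = 1 := by
  rintro r (⟨i, j, -, rfl⟩ | ⟨i, j, -, rfl⟩) <;>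
    simp only [_root_.map_mul, _root_.map_inv, FreeGroup.lift_apply_of] <;> group

/-- exponent sum -/
private def eS : B3 →* Multiplicative ℤ := PresentedGroup.toGroup braid_rels_lift

private lemma eS_b3 (i : Fin 2) : eS (b3 i) = Multiplicative.ofAdd (1 : ℤ) :=
  PresentedGroup.toGroup.of braid_rels_lift

private lemma coset (g : B3) : g * (b3 0) ^ (-(eS g).toAdd) ∈ N3 := by
  induction g using PresentedGroup.induction_on with
  | H z =>
    induction z using FreeGroup.induction_on with
    | C1 => simpa using one_mem N3
    | of i =>
      have hmk : PresentedGroup.mk (braidRels (3-1)) (FreeGroup.of i) = b3 i := rfl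
      rw [hmk, eS_b3, toAdd_ofAdd]
      fin_cases i
      · exact show b3 0 * (b3 0) ^ (-1 : ℤ) ∈ N3 by
          have e : b3 0 * (b3 0) ^ (-1 : ℤ) = 1 := by group
          rw [e]; exact one_mem N3
      · exact show b3 1 * (b3 0) ^ (-1 : ℤ) ∈ N3 by
          have e : b3 1 * (b3 0) ^ (-1 : ℤ) = a₂ := by unfold a₂; group
          rw [e]; exact ha₂
    | inv_of i _ =>
      have hmk : PresentedGroup.mk (braidRels (3-1)) (FreeGroup.of i : FreeGroup (Fin (3-1)))⁻¹
          = (b3 i)⁻¹ := by simp only [_root_.map_inv]; rfl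
      rw [hmk, _root_.map_inv, eS_b3]
      simp only [toAdd_inv, toAdd_ofAdd, neg_neg]
      fin_cases i
      · exact show (b3 0)⁻¹ * (b3 0) ^ (1 : ℤ) ∈ N3 by
          have e : (b3 0)⁻¹ * (b3 0) ^ (1 : ℤ) = 1 := by group
          rw [e]; exact one_mem N3
      · exact show (b3 1)⁻¹ * (b3 0) ^ (1 : ℤ) ∈ N3 by
          have e : (b3 1)⁻¹ * (b3 0) ^ (1 : ℤ) = a₁⁻¹ := by unfold a₁; group
          rw [e]; exact inv_mem ha₁
    | mul z w hz hw =>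
      rw [_root_.map_mul, _root_.map_mul]
      set u := PresentedGroup.mk (braidRels (3-1)) z with hu
      set v := PresentedGroup.mk (braidRels (3-1)) w with hv
      set a := (eS u).toAdd with ha
      set b := (eS v).toAdd with hb
      have h2 : (b3 0) ^ a * (v * (b3 0) ^ (-b)) * ((b3 0) ^ a)⁻¹ ∈ N3 :=
        N3_normal.conj_mem _ hw _
      have := mul_mem hz h2
      have e : u * v * (b3 0) ^ (-(eS u * eS v).toAdd) =
          (u * (b3 0) ^ (-a)) * ((b3 0) ^ a * (v * (b3 0) ^ (-b)) * ((b3 0) ^ a)⁻¹) := by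
        rw [toAdd_mul, ← ha, ← hb]; group
      rwa [e]

theorem burau_B3_faithful_of_faithful_on_N (t₀ : ℝ) (h0 : t₀ ≠ 0) (h1 : t₀ ≠ 1) (hm1 : t₀ ≠ -1)
    (S : B3 →* GL (Fin 2) ℝ) (hS : IsBurau3 t₀ S)
    (hN : Function.Injective (S.domRestrict N3)) :
    Function.Injective S := by
  have hu0 : (-t₀) ≠ 0 := neg_ne_zero.mpr h0
  set u : ℝˣ := Units.mk0 (-t₀) hu0 with hudef
  have key : ∀ i : Fin 2, (Matrix.GeneralLinearGroup.det).comp S (PresentedGroup.of i)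
      = ((zpowersHom ℝˣ u).comp eS) (PresentedGroup.of i) := by
    intro i
    have h2 : ((zpowersHom ℝˣ u).comp eS) (PresentedGroup.of i) = u := by
      show zpowersHom ℝˣ u (eS (b3 i)) = u
      rw [eS_b3, zpowersHom_apply, toAdd_ofAdd, zpow_one]
    rw [h2]
    refine Units.ext ?_
    show Matrix.det ((S (b3 i) : Matrix (Fin 2) (Fin 2) ℝ)) = -t₀
    fin_cases i
    · show Matrix.det ((S (b3 0) : Matrix (Fin 2) (Fin 2) ℝ)) = -t₀
      rw [hS.1]; simp [Matrix.det_fin_two_of]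
    · show Matrix.det ((S (b3 1) : Matrix (Fin 2) (Fin 2) ℝ)) = -t₀
      rw [hS.2]; simp [Matrix.det_fin_two_of]
  have hhom : (Matrix.GeneralLinearGroup.det).comp S = (zpowersHom ℝˣ u).comp eS :=
    PresentedGroup.ext key
  rw [injective_iff_map_eq_one]
  intro g hg
  have hdet : (Matrix.GeneralLinearGroup.det).comp S g = 1 := by
    show Matrix.GeneralLinearGroup.det (S g) = 1
    rw [hg]; exact map_one _
  have hval : ((-t₀) : ℝ) ^ (eS g).toAdd = 1 := by
    have := DFunLike.congr_fun hhom g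
    rw [hdet] at this
    have := congrArg (Units.val) this.symm
    simpa [zpowersHom_apply, hudef] using this
  have habs : |t₀| ^ (eS g).toAdd = 1 := by
    have h2 : |(-t₀) ^ (eS g).toAdd| = |(-t₀)| ^ (eS g).toAdd :=
      map_zpow₀ (absHom : ℝ →*₀ ℝ) (-t₀) _
    rw [hval, abs_one, abs_neg] at h2
    exact h2.symm
  have hlog : Real.log |t₀| ≠ 0 := by
    intro h
    rcases Real.log_eq_zero.mp h with h' | h' | h'
    · exact h0 (abs_eq_zero.mp h')
    · rcases abs_eq (by norm_num : (0:ℝ) ≤ 1) |>.mp h' with h'' | h''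
      · exact h1 h''
      · exact hm1 h''
    · have := abs_nonneg t₀; linarith
  have hzero : (eS g).toAdd = 0 := by
    have hk : ((eS g).toAdd : ℝ) * Real.log |t₀| = 0 := by
      rw [← Real.log_zpow, habs, Real.log_one]
    rcases mul_eq_zero.mp hk with h' | h'
    · exact_mod_cast h'
    · exact absurd h' hlog
  have geN : g ∈ N3 := by
    have := coset g
    rwa [hzero, neg_zero, zpow_zero, mul_one] at this
  have hrest : S.domRestrict N3 ⟨g, geN⟩ = S.domRestrict N3 1 := by
    rw [_root_.map_one]
    show S g = 1
    exact hg
  simpa using Subtype.ext_iff.mp (hN hrest)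
end

section
/- Let a be an integer with |a| > 2 and let α be a real root of x² - a·x + 1, so that α is a real quadratic algebraic integer whose Galois conjugate is α⁻¹. Then for every n ≥ 2, the image of the Burau specialization Sⁿ_α : Bₙ → GL_{n-1}(ℝ) is a discrete subgroup of GL_{n-1}(ℝ). -/
open Matrix
open scoped MatrixGroups

namespace BurauDisc

variable {m : ℕ}

/-- linear algebra of rank-one updates -/
lemma vv_mul_vv (u w x z : Fin m → ℝ) :
    vecMulVec u w * vecMulVec x z = (w ⬝ᵥ x) • vecMulVec u z := by
  funext r c
  simp only [mul_apply, vecMulVec_apply, Matrix.smul_apply, dotProduct, smul_eq_mul, Finset.sum_mul]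
  exact Finset.sum_congr rfl fun k _ => by ring

lemma mul_vv (X : Matrix (Fin m) (Fin m) ℝ) (u z : Fin m → ℝ) :
    X * vecMulVec u z = vecMulVec (X.mulVec u) z := by
  funext r c
  simp only [mul_apply, vecMulVec_apply, mulVec, dotProduct, Finset.sum_mul]
  exact Finset.sum_congr rfl fun k _ => by ring

lemma vv_mul (X : Matrix (Fin m) (Fin m) ℝ) (u z : Fin m → ℝ) :
    vecMulVec u z * X = vecMulVec u (X.vecMul z) := by
  funext r c
  simp only [mul_apply, vecMulVec_apply, vecMul, dotProduct, Finset.mul_sum]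
  exact Finset.sum_congr rfl fun k _ => by ring

lemma vv_transpose (u z : Fin m → ℝ) : (vecMulVec u z)ᵀ = vecMulVec z u := by
  funext r c; simp [vecMulVec_apply, mul_comm]

lemma vv_add_right (u x y : Fin m → ℝ) :
    vecMulVec u (x + y) = vecMulVec u x + vecMulVec u y := by
  funext r c; simp [vecMulVec_apply, mul_add]

lemma vv_smul_right (u x : Fin m → ℝ) (t : ℝ) :
    vecMulVec u (t • x) = t • vecMulVec u x := by
  funext r c; simp [vecMulVec_apply]; ring

lemma vv_smul_left (u x : Fin m → ℝ) (t : ℝ) :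
    vecMulVec (t • u) x = t • vecMulVec u x := by
  funext r c; simp [vecMulVec_apply]; ring



def Jmat (m : ℕ) (α : ℝ) : Matrix (Fin m) (Fin m) ℝ :=
  fun r c => if r = c then α + 1 else if (c : ℕ) = (r : ℕ) + 1 then -α
    else if (r : ℕ) = (c : ℕ) + 1 then -1 else 0

/-- row-`i` correction vector of `burauMat m t i` -/
def wvec (m : ℕ) (t : ℝ) (i : Fin m) : Fin m → ℝ :=
  fun c => if (c : ℕ) + 1 = (i : ℕ) then t else if c = i then -(t+1)
    else if (c : ℕ) = (i : ℕ) + 1 then 1 else 0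

/-- row-`i` correction vector of the inverse Burau matrix (`s` the inverse parameter) -/
def cvec (m : ℕ) (s : ℝ) (i : Fin m) : Fin m → ℝ :=
  fun c => if (c : ℕ) + 1 = (i : ℕ) then 1 else if c = i then -(s+1)
    else if (c : ℕ) = (i : ℕ) + 1 then s else 0

lemma burau_eq (t : ℝ) (i : Fin m) :
    burauMat m t i = 1 + vecMulVec (Pi.single i 1) (wvec m t i) := by
  funext r c
  simp only [burauMat, Matrix.add_apply, Matrix.one_apply, vecMulVec_apply, Pi.single_apply,
    wvec, Fin.ext_iff]
  split_ifs <;> first | ring1 | (exfalso; omega)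

lemma wvec_eq_smul_cvec {t s : ℝ} (hts : t * s = 1) (i : Fin m) :
    wvec m t i = t • cvec m s i := by
  funext c
  simp only [wvec, cvec, Pi.smul_apply, smul_eq_mul, Fin.ext_iff]
  split_ifs <;> first | ring1 | linear_combination hts | linear_combination -hts

lemma cvec_eq_smul_wvec {t s : ℝ} (hts : t * s = 1) (i : Fin m) :
    cvec m s i = s • wvec m t i := by
  funext c
  simp only [wvec, cvec, Pi.smul_apply, smul_eq_mul, Fin.ext_iff]
  split_ifs <;> first | ring1 | linear_combination hts | linear_combination -hts |
    linear_combination s * hts | linear_combination -(s * hts)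

/-- row `i` of `J` equals `-α • wvec β` -/
lemma Jrow_eq {α β : ℝ} (hαβ : α * β = 1) (i : Fin m) :
    (fun c => Jmat m α i c) = (-α) • wvec m β i := by
  funext c
  simp only [Jmat, wvec, Pi.smul_apply, smul_eq_mul, Fin.ext_iff]
  split_ifs <;> first | ring1 | (exfalso; omega) | linear_combination hαβ |
    linear_combination -hαβ

/-- column `i` of `J` equals `-1 • wvec α` -/
lemma Jcol_eq (α : ℝ) (i : Fin m) :
    (fun r => Jmat m α r i) = (-1 : ℝ) • wvec m α i := by
  funext r
  simp only [Jmat, wvec, Pi.smul_apply, smul_eq_mul, Fin.ext_iff]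
  split_ifs <;> first | ring1 | (exfalso; omega)

/-- decomposition of `wvec` into integer parts: `wvec t = p₀ + t • q₀` -/
def p0 (m : ℕ) (i : Fin m) : Fin m → ℝ :=
  fun c => if c = i then -1 else if (c : ℕ) = (i : ℕ) + 1 then 1 else 0

def q0 (m : ℕ) (i : Fin m) : Fin m → ℝ :=
  fun c => if (c : ℕ) + 1 = (i : ℕ) then 1 else if c = i then -1 else 0

lemma wvec_decomp (t : ℝ) (i : Fin m) : wvec m t i = p0 m i + t • q0 m i := by
  funext c
  simp only [wvec, p0, q0, Pi.add_apply, Pi.smul_apply, smul_eq_mul, Fin.ext_iff]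
  split_ifs <;> first | ring1 | (exfalso; omega)

/-- decomposition of `cvec` at parameter `a - t` : `cvec (a-t) = pC + t • qC` -/
def pC (m : ℕ) (a : ℝ) (i : Fin m) : Fin m → ℝ :=
  fun c => if (c : ℕ) + 1 = (i : ℕ) then 1 else if c = i then -(a+1)
    else if (c : ℕ) = (i : ℕ) + 1 then a else 0

def qC (m : ℕ) (i : Fin m) : Fin m → ℝ :=
  fun c => if c = i then 1 else if (c : ℕ) = (i : ℕ) + 1 then -1 else 0

lemma cvec_decomp (a t : ℝ) (i : Fin m) :
    cvec m (a - t) i = pC m a i + t • qC m i := by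
  funext c
  simp only [cvec, pC, qC, Pi.add_apply, Pi.smul_apply, smul_eq_mul, Fin.ext_iff]
  split_ifs <;> first | ring1 | (exfalso; omega)

section Core

variable {m : ℕ}

lemma wvec_at_i (t : ℝ) (i : Fin m) : wvec m t i i = -(t+1) := by
  simp [wvec]

lemma cvec_at_i (s : ℝ) (i : Fin m) : cvec m s i i = -(s+1) := by
  simp [cvec]

lemma Jmat_at_ii (α : ℝ) (i : Fin m) : Jmat m α i i = α + 1 := by
  simp [Jmat]

/-- the inverse of the Burau matrix -/
def burauInv (m : ℕ) (s : ℝ) (i : Fin m) : Matrix (Fin m) (Fin m) ℝ :=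
  1 + vecMulVec (Pi.single i 1) (cvec m s i)

lemma burau_mul_burauInv {t s : ℝ} (hts : t * s = 1) (i : Fin m) :
    burauMat m t i * burauInv m s i = 1 := by
  rw [burau_eq, burauInv, mul_add, add_mul, add_mul, mul_one, one_mul, vv_mul_vv,
    dotProduct_single, mul_one, wvec_at_i, wvec_eq_smul_cvec hts, vv_smul_right]
  module

lemma burauInv_mul_burau {t s : ℝ} (hts : t * s = 1) (i : Fin m) :
    burauInv m s i * burauMat m t i = 1 := by
  rw [burau_eq, burauInv, mul_add, add_mul, add_mul, mul_one, one_mul, vv_mul_vv,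
    dotProduct_single, mul_one, cvec_at_i, cvec_eq_smul_wvec hts, vv_smul_right]
  module

/-- the core "Squier form" identity -/
lemma core_identity {α β : ℝ} (hαβ : α * β = 1) (i : Fin m) :
    (burauMat m α i)ᵀ * (Jmat m α * burauMat m β i) = Jmat m α := by
  rw [burau_eq α, burau_eq β, transpose_add, transpose_one, vv_transpose]
  rw [mul_add (Jmat m α), mul_one, mul_vv, mulVec_single]
  have hcol : (MulOpposite.op (1:ℝ) • (Jmat m α).col i) = (-1 : ℝ) • wvec m α i := by
    funext r; have := congrFun (Jcol_eq α i) r; simp only [Pi.smul_apply] at this ⊢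
    rw [← this]; simp
  rw [hcol, vv_smul_left]
  rw [add_mul, one_mul, mul_add, vv_mul, single_vecMul]
  have hrow : ((1:ℝ) • (Jmat m α).row i) = (-α) • wvec m β i := by
    funext c; have := congrFun (Jrow_eq hαβ i) c; simp only [Pi.smul_apply] at this ⊢
    rw [← this]; simp
  rw [hrow, vv_smul_right, mul_smul_comm, vv_mul_vv, single_dotProduct, one_mul, wvec_at_i]
  module

end Core

section Det

variable {m : ℕ}

lemma sum_ite_coe (x : Fin m → ℝ) (j : ℕ) :
    ∑ c : Fin m, (if (c : ℕ) = j then x c else 0) =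
      (if h : j < m then x ⟨j, h⟩ else 0) := by
  split_ifs with h
  · rw [Finset.sum_eq_single_of_mem (⟨j, h⟩ : Fin m) (Finset.mem_univ _)]
    · simp
    · intro b _ hb
      have : ¬ ((b : ℕ) = j) := fun hbj => hb (Fin.ext hbj)
      simp [this]
  · apply Finset.sum_eq_zero
    intro c _
    have : ¬ ((c : ℕ) = j) := by have := c.isLt; omega
    simp [this]

lemma tele (Y : ℕ → ℝ) (m' : ℕ) (hYm : Y (m' + 1) = 0)
    (h : ∑ k ∈ Finset.range (m' + 1), Y k * Y k =
         ∑ k ∈ Finset.range (m' + 1), Y k * Y (k + 1)) :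
    ∀ k < m' + 1, Y k = 0 := by
  set T1 := ∑ k ∈ Finset.range (m' + 1), Y k * Y k with hT1
  set T2' := ∑ k ∈ Finset.range m', Y k * Y (k + 1) with hT2'
  have hT2 : ∑ k ∈ Finset.range (m' + 1), Y k * Y (k + 1) = T2' := by
    rw [Finset.sum_range_succ, hYm, mul_zero, add_zero]
  have hA : ∑ k ∈ Finset.range m', Y k * Y k = T1 - Y m' * Y m' := by
    rw [hT1, Finset.sum_range_succ]; ring
  have hB : ∑ k ∈ Finset.range m', Y (k + 1) * Y (k + 1) = T1 - Y 0 * Y 0 := by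
    rw [hT1, Finset.sum_range_succ' (fun k => Y k * Y k) m']; ring
  have hE : ∑ k ∈ Finset.range m', (Y k - Y (k + 1))^2 =
      2 * (T1 - T2') - Y m' * Y m' - Y 0 * Y 0 := by
    have : ∀ k ∈ Finset.range m', (Y k - Y (k + 1))^2 =
        Y k * Y k + Y (k+1) * Y (k+1) - 2 * (Y k * Y (k + 1)) := by
      intro k _; ring
    rw [Finset.sum_congr rfl this, Finset.sum_sub_distrib, Finset.sum_add_distrib,
      hA, hB, ← Finset.mul_sum, ← hT2']
    ring
  have hT12 : T1 = T2' := by rw [h, hT2]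
  have hEnn : (0:ℝ) ≤ ∑ k ∈ Finset.range m', (Y k - Y (k + 1))^2 :=
    Finset.sum_nonneg fun k _ => sq_nonneg _
  have hsum0 : Y m' * Y m' + Y 0 * Y 0 + ∑ k ∈ Finset.range m', (Y k - Y (k + 1))^2 = 0 := by
    rw [hE, hT12]; ring
  have h1 : Y m' * Y m' = 0 ∧ Y 0 * Y 0 = 0 ∧
      ∑ k ∈ Finset.range m', (Y k - Y (k + 1))^2 = 0 := by
    refine ⟨?_, ?_, ?_⟩ <;>
      linarith [mul_self_nonneg (Y m'), mul_self_nonneg (Y 0), hEnn, hsum0]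
  have hY0 : Y 0 = 0 := mul_self_eq_zero.1 h1.2.1
  have hstep : ∀ k ∈ Finset.range m', (Y k - Y (k + 1))^2 = 0 :=
    fun k hk => (Finset.sum_eq_zero_iff_of_nonneg (fun k _ => sq_nonneg _)).1 h1.2.2 k hk
  have heq : ∀ k, k ≤ m' → Y k = 0 := by
    intro k
    induction k with
    | zero => intro _; exact hY0
    | succ j ih =>
      intro hj
      have hjm : j ∈ Finset.range m' := Finset.mem_range.2 (by omega)
      have := hstep j hjm
      have hd : Y j - Y (j+1) = 0 := by
        exact pow_eq_zero_iff (by norm_num) |>.1 this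
      have hYj : Y j = 0 := ih (by omega)
      linarith
  intro k hk
  exact heq k (by omega)

lemma Jmat_det_ne_zero {α : ℝ} (hα1 : α + 1 ≠ 0) (hm : 1 ≤ m) :
    (Jmat m α).det ≠ 0 := by
  intro hdet
  obtain ⟨x, hx0, hxJ⟩ := (Matrix.exists_mulVec_eq_zero_iff).2 hdet
  set Y : ℕ → ℝ := fun k => if h : k < m then x ⟨k, h⟩ else 0 with hY
  have hYval : ∀ c : Fin m, Y (c : ℕ) = x c := by
    intro c; simp [hY, c.isLt]
  -- split the matrix entries
  have hsplit : ∀ r c : Fin m, x r * (Jmat m α r c * x c) =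
      (if (c : ℕ) = (r : ℕ) then x r * ((α+1) * x c) else 0) +
      (if (c : ℕ) = (r : ℕ) + 1 then x r * (-α * x c) else 0) +
      (if (r : ℕ) = (c : ℕ) + 1 then x r * (-1 * x c) else 0) := by
    intro r c
    simp only [Jmat, Fin.ext_iff]
    split_ifs <;> first | ring1 | (exfalso; omega)
  have hdot : x ⬝ᵥ (Jmat m α).mulVec x = (α + 1) *
      ((∑ r : Fin m, x r * x r) - ∑ r : Fin m, x r * Y ((r : ℕ) + 1)) := by
    have expand : x ⬝ᵥ (Jmat m α).mulVec x =
        ∑ r : Fin m, ∑ c : Fin m, x r * (Jmat m α r c * x c) := by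
      simp only [dotProduct, Matrix.mulVec, Finset.mul_sum]
    rw [expand]
    have : ∀ r : Fin m, ∑ c : Fin m, x r * (Jmat m α r c * x c) =
        (x r * ((α+1) * x r)) + (x r * (-α * Y ((r:ℕ)+1))) +
        ∑ c : Fin m, (if (r : ℕ) = (c : ℕ) + 1 then x r * (-1 * x c) else 0) := by
      intro r
      rw [Finset.sum_congr rfl (fun c _ => hsplit r c)]
      rw [Finset.sum_add_distrib, Finset.sum_add_distrib]
      congr 1
      congr 1
      · rw [sum_ite_coe (fun c => x r * ((α+1) * x c)) (r:ℕ)]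
        simp [r.isLt]
      · rw [sum_ite_coe (fun c => x r * (-α * x c)) ((r:ℕ)+1)]
        simp only [hY]
        split_ifs with h <;> simp
    rw [Finset.sum_congr rfl (fun r _ => this r)]
    rw [Finset.sum_add_distrib]
    have hswap : ∑ r : Fin m, ∑ c : Fin m,
        (if (r : ℕ) = (c : ℕ) + 1 then x r * (-1 * x c) else 0) =
        ∑ c : Fin m, x c * (-1 * Y ((c:ℕ)+1)) := by
      rw [Finset.sum_comm]
      apply Finset.sum_congr rfl
      intro c _
      have : ∀ r : Fin m, (if (r : ℕ) = (c : ℕ) + 1 then x r * (-1 * x c) else 0) =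
          (if (r : ℕ) = (c : ℕ) + 1 then x c * (-1 * x r) else 0) := by
        intro r; split_ifs <;> ring
      rw [Finset.sum_congr rfl (fun r _ => this r)]
      rw [sum_ite_coe (fun r => x c * (-1 * x r)) ((c:ℕ)+1)]
      simp only [hY]
      split_ifs with h <;> simp
    rw [hswap, Finset.sum_add_distrib]
    have e1 : ∑ r : Fin m, x r * ((α+1) * x r) = (α+1) * ∑ r : Fin m, x r * x r := by
      rw [Finset.mul_sum]; exact Finset.sum_congr rfl fun r _ => by ring
    have e2 : ∑ r : Fin m, x r * (-α * Y ((r:ℕ)+1)) =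
        -α * ∑ r : Fin m, x r * Y ((r:ℕ)+1) := by
      rw [Finset.mul_sum]; exact Finset.sum_congr rfl fun r _ => by ring
    have e3 : ∑ c : Fin m, x c * (-1 * Y ((c:ℕ)+1)) =
        -1 * ∑ r : Fin m, x r * Y ((r:ℕ)+1) := by
      rw [Finset.mul_sum]; exact Finset.sum_congr rfl fun r _ => by ring
    rw [e1, e2, e3]; ring
  rw [hxJ] at hdot
  simp only [dotProduct_zero] at hdot
  have hT : (∑ r : Fin m, x r * x r) = ∑ r : Fin m, x r * Y ((r : ℕ) + 1) := by
    have := hdot.symm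
    rcases mul_eq_zero.1 this with h | h
    · exact absurd h hα1
    · linarith
  -- convert to range sums
  obtain ⟨m', rfl⟩ : ∃ m', m = m' + 1 := ⟨m - 1, by omega⟩
  have hT1 : (∑ r : Fin (m'+1), x r * x r) = ∑ k ∈ Finset.range (m'+1), Y k * Y k := by
    rw [Finset.sum_range fun k => Y k * Y k]
    exact Finset.sum_congr rfl fun r _ => by rw [hYval]
  have hT2 : (∑ r : Fin (m'+1), x r * Y ((r : ℕ) + 1)) =
      ∑ k ∈ Finset.range (m'+1), Y k * Y (k+1) := by
    rw [Finset.sum_range fun k => Y k * Y (k+1)]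
    exact Finset.sum_congr rfl fun r _ => by rw [hYval]
  have hYm : Y (m' + 1) = 0 := by simp [hY]
  have hall := tele Y m' hYm (by rw [← hT1, ← hT2, hT])
  apply hx0
  funext c
  have := hall (c : ℕ) c.isLt
  rw [hYval] at this
  exact this

end Det

section Pairs

variable {m : ℕ}

def IntMat (X : Matrix (Fin m) (Fin m) ℝ) : Prop := ∀ r c, ∃ z : ℤ, X r c = z

def IntVec (v : Fin m → ℝ) : Prop := ∀ c, ∃ z : ℤ, v c = z

lemma intMat_one : IntMat (1 : Matrix (Fin m) (Fin m) ℝ) := by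
  intro r c
  refine ⟨if r = c then 1 else 0, ?_⟩
  simp only [Matrix.one_apply]
  split_ifs <;> simp

lemma intMat_zero : IntMat (0 : Matrix (Fin m) (Fin m) ℝ) := fun r c => ⟨0, by simp⟩

lemma intMat_add {X Y : Matrix (Fin m) (Fin m) ℝ} (hX : IntMat X) (hY : IntMat Y) :
    IntMat (X + Y) := by
  intro r c
  obtain ⟨z, hz⟩ := hX r c; obtain ⟨w, hw⟩ := hY r c
  exact ⟨z + w, by simp [Matrix.add_apply, hz, hw]⟩

lemma intMat_sub {X Y : Matrix (Fin m) (Fin m) ℝ} (hX : IntMat X) (hY : IntMat Y) :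
    IntMat (X - Y) := by
  intro r c
  obtain ⟨z, hz⟩ := hX r c; obtain ⟨w, hw⟩ := hY r c
  exact ⟨z - w, by simp [Matrix.sub_apply, hz, hw]⟩

lemma intMat_mul {X Y : Matrix (Fin m) (Fin m) ℝ} (hX : IntMat X) (hY : IntMat Y) :
    IntMat (X * Y) := by
  intro r c
  choose f hf using hX
  choose g hg using hY
  refine ⟨∑ k : Fin m, f r k * g k c, ?_⟩
  rw [Matrix.mul_apply]
  push_cast
  exact Finset.sum_congr rfl fun k _ => by rw [hf, hg]

lemma intMat_smul {X : Matrix (Fin m) (Fin m) ℝ} (z : ℤ) (hX : IntMat X) :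
    IntMat ((z : ℝ) • X) := by
  intro r c
  obtain ⟨w, hw⟩ := hX r c
  exact ⟨z * w, by simp [Matrix.smul_apply, hw]⟩

lemma intMat_vv {u v : Fin m → ℝ} (hu : IntVec u) (hv : IntVec v) :
    IntMat (vecMulVec u v) := by
  intro r c
  obtain ⟨z, hz⟩ := hu r; obtain ⟨w, hw⟩ := hv c
  exact ⟨z * w, by simp [vecMulVec_apply, hz, hw]⟩

lemma intVec_single (i : Fin m) : IntVec (Pi.single i 1 : Fin m → ℝ) := by
  intro c
  refine ⟨if c = i then 1 else 0, ?_⟩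
  rw [Pi.single_apply]
  split_ifs <;> simp

lemma intVec_p0 (i : Fin m) : IntVec (p0 m i) := by
  intro c
  refine ⟨if c = i then -1 else if (c : ℕ) = (i : ℕ) + 1 then 1 else 0, ?_⟩
  rw [p0]
  split_ifs <;> simp

lemma intVec_q0 (i : Fin m) : IntVec (q0 m i) := by
  intro c
  refine ⟨if (c : ℕ) + 1 = (i : ℕ) then 1 else if c = i then -1 else 0, ?_⟩
  rw [q0]
  split_ifs <;> simp

lemma intVec_pC (a : ℤ) (i : Fin m) : IntVec (pC m (a : ℝ) i) := by
  intro c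
  refine ⟨if (c : ℕ) + 1 = (i : ℕ) then 1 else if c = i then -(a+1)
    else if (c : ℕ) = (i : ℕ) + 1 then a else 0, ?_⟩
  rw [pC]
  split_ifs <;> push_cast <;> ring

lemma intVec_qC (i : Fin m) : IntVec (qC m i) := by
  intro c
  refine ⟨if c = i then 1 else if (c : ℕ) = (i : ℕ) + 1 then -1 else 0, ?_⟩
  rw [qC]
  split_ifs <;> simp

lemma pair_mul {a t : ℝ} (ht : t * t = a * t - 1)
    (P₁ Q₁ P₂ Q₂ : Matrix (Fin m) (Fin m) ℝ) :
    (P₁ + t • Q₁) * (P₂ + t • Q₂) =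
      (P₁ * P₂ - Q₁ * Q₂) + t • (P₁ * Q₂ + Q₁ * P₂ + a • (Q₁ * Q₂)) := by
  simp only [add_mul, mul_add, smul_mul_assoc, mul_smul_comm, smul_smul]
  match_scalars <;> first | ring1 | linear_combination ht

end Pairs

section Induction

def Good (n : ℕ) (α β : ℝ) (S : BraidGroup n →* GL (Fin (n-1)) ℝ)
    (g : BraidGroup n) : Prop :=
  ∃ P Q : Matrix (Fin (n-1)) (Fin (n-1)) ℝ, IntMat P ∧ IntMat Q ∧
    ((S g : Matrix (Fin (n-1)) (Fin (n-1)) ℝ) = P + α • Q) ∧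
    ((↑((S g)⁻¹) : Matrix (Fin (n-1)) (Fin (n-1)) ℝ)ᵀ * Jmat (n-1) α
      = Jmat (n-1) α * (P + β • Q))

variable {n : ℕ} {a : ℤ} {α β : ℝ} {S : BraidGroup n →* GL (Fin (n-1)) ℝ}

lemma good_one : Good n α β S 1 := by
  refine ⟨1, 0, intMat_one, intMat_zero, ?_, ?_⟩
  · simp
  · simp

lemma good_mul (hα2 : α * α = (a : ℝ) * α - 1) (hβ2 : β * β = (a : ℝ) * β - 1)
    {g h : BraidGroup n} (hg : Good n α β S g) (hh : Good n α β S h) :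
    Good n α β S (g * h) := by
  obtain ⟨P₁, Q₁, hP₁, hQ₁, hd₁, hc₁⟩ := hg
  obtain ⟨P₂, Q₂, hP₂, hQ₂, hd₂, hc₂⟩ := hh
  refine ⟨P₁ * P₂ - Q₁ * Q₂, P₁ * Q₂ + Q₁ * P₂ + (a : ℝ) • (Q₁ * Q₂),
    intMat_sub (intMat_mul hP₁ hP₂) (intMat_mul hQ₁ hQ₂),
    intMat_add (intMat_add (intMat_mul hP₁ hQ₂) (intMat_mul hQ₁ hP₂))
      (intMat_smul a (intMat_mul hQ₁ hQ₂)), ?_, ?_⟩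
  · rw [_root_.map_mul, Units.val_mul, hd₁, hd₂, pair_mul (a := (a:ℝ)) (by linarith [hα2])]
  · rw [_root_.map_mul, _root_.mul_inv_rev, Units.val_mul, transpose_mul, mul_assoc, hc₂,
      ← mul_assoc, hc₁, mul_assoc, ← pair_mul (a := (a:ℝ)) (by linarith [hβ2]) P₁ Q₁ P₂ Q₂]

lemma good_of (hS : IsBurauSpec n α S) (hαβ : α * β = 1) (i : Fin (n-1)) :
    Good n α β S (PresentedGroup.of i) := by
  set A := burauMat (n-1) α i with hA
  set Cinv := burauInv (n-1) β i with hC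
  have hval : (↑(S (PresentedGroup.of i)) : Matrix (Fin (n-1)) (Fin (n-1)) ℝ) = A := hS i
  have hAC : A * Cinv = 1 := burau_mul_burauInv hαβ i
  have hvalinv : (↑((S (PresentedGroup.of i))⁻¹) : Matrix (Fin (n-1)) (Fin (n-1)) ℝ)
      = Cinv := by
    have h1 : (↑((S (PresentedGroup.of i))⁻¹) : Matrix (Fin (n-1)) (Fin (n-1)) ℝ) * A
        = 1 := by
      rw [← hval, ← Units.val_mul, inv_mul_cancel, Units.val_one]
    calc (↑((S (PresentedGroup.of i))⁻¹) : Matrix (Fin (n-1)) (Fin (n-1)) ℝ)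
        = ↑((S (PresentedGroup.of i))⁻¹) * (A * Cinv) := by rw [hAC, mul_one]
      _ = (↑((S (PresentedGroup.of i))⁻¹) * A) * Cinv := by rw [mul_assoc]
      _ = Cinv := by rw [h1, one_mul]
  have hdecomp : ∀ t : ℝ, burauMat (n-1) t i =
      (1 + vecMulVec (Pi.single i 1) (p0 (n-1) i)) +
        t • vecMulVec (Pi.single i 1) (q0 (n-1) i) := by
    intro t
    rw [burau_eq, wvec_decomp, vv_add_right, vv_smul_right, add_assoc]
  refine ⟨1 + vecMulVec (Pi.single i 1) (p0 (n-1) i),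
    vecMulVec (Pi.single i 1) (q0 (n-1) i),
    intMat_add intMat_one (intMat_vv (intVec_single i) (intVec_p0 i)),
    intMat_vv (intVec_single i) (intVec_q0 i), ?_, ?_⟩
  · rw [hval, hA, hdecomp α]
  · rw [hvalinv, ← hdecomp β]
    have hcore := core_identity hαβ i
    calc Cinvᵀ * Jmat (n-1) α
        = Cinvᵀ * ((burauMat (n-1) α i)ᵀ * (Jmat (n-1) α * burauMat (n-1) β i)) := by
          rw [hcore]
      _ = (Cinvᵀ * (burauMat (n-1) α i)ᵀ) * (Jmat (n-1) α * burauMat (n-1) β i) := by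
          rw [mul_assoc]
      _ = (burauMat (n-1) α i * Cinv)ᵀ * (Jmat (n-1) α * burauMat (n-1) β i) := by
          rw [transpose_mul]
      _ = Jmat (n-1) α * burauMat (n-1) β i := by
          rw [← hA, hAC, transpose_one, one_mul]

lemma good_of_inv (hS : IsBurauSpec n α S) (hαβ : α * β = 1) (hba : β = (a : ℝ) - α)
    (i : Fin (n-1)) : Good n α β S ((PresentedGroup.of i)⁻¹) := by
  set A := burauMat (n-1) α i with hA
  set Cinv := burauInv (n-1) β i with hC
  have hval : (↑(S (PresentedGroup.of i)) : Matrix (Fin (n-1)) (Fin (n-1)) ℝ) = A := hS i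
  have hAC : A * Cinv = 1 := burau_mul_burauInv hαβ i
  have hvalinv : (↑((S (PresentedGroup.of i))⁻¹) : Matrix (Fin (n-1)) (Fin (n-1)) ℝ)
      = Cinv := by
    have h1 : (↑((S (PresentedGroup.of i))⁻¹) : Matrix (Fin (n-1)) (Fin (n-1)) ℝ) * A
        = 1 := by
      rw [← hval, ← Units.val_mul, inv_mul_cancel, Units.val_one]
    calc (↑((S (PresentedGroup.of i))⁻¹) : Matrix (Fin (n-1)) (Fin (n-1)) ℝ)
        = ↑((S (PresentedGroup.of i))⁻¹) * (A * Cinv) := by rw [hAC, mul_one]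
      _ = (↑((S (PresentedGroup.of i))⁻¹) * A) * Cinv := by rw [mul_assoc]
      _ = Cinv := by rw [h1, one_mul]
  have hdecompC : ∀ t : ℝ, burauInv (n-1) ((a : ℝ) - t) i =
      (1 + vecMulVec (Pi.single i 1) (pC (n-1) (a : ℝ) i)) +
        t • vecMulVec (Pi.single i 1) (qC (n-1) i) := by
    intro t
    rw [burauInv, cvec_decomp, vv_add_right, vv_smul_right, add_assoc]
  have hαab : α = (a : ℝ) - β := by rw [hba]; ring
  refine ⟨1 + vecMulVec (Pi.single i 1) (pC (n-1) (a : ℝ) i),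
    vecMulVec (Pi.single i 1) (qC (n-1) i),
    intMat_add intMat_one (intMat_vv (intVec_single i) (intVec_pC a i)),
    intMat_vv (intVec_single i) (intVec_qC i), ?_, ?_⟩
  · rw [map_inv, hvalinv, hC, ← hdecompC α, ← hba]
  · rw [map_inv, inv_inv, hval, ← hdecompC β, ← hαab]
    set Cα := burauInv (n-1) α i with hCα
    have hBC : burauMat (n-1) β i * Cα = 1 :=
      burau_mul_burauInv (by rw [mul_comm]; exact hαβ) i
    have hcore := core_identity hαβ i
    calc Aᵀ * Jmat (n-1) α
        = Aᵀ * ((Jmat (n-1) α * burauMat (n-1) β i) * Cα) := by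
          rw [mul_assoc (Jmat (n-1) α) (burauMat (n-1) β i) Cα, hBC, mul_one]
      _ = (Aᵀ * (Jmat (n-1) α * burauMat (n-1) β i)) * Cα := (mul_assoc _ _ _).symm
      _ = Jmat (n-1) α * Cα := by rw [hA, hcore]

lemma good_all (hS : IsBurauSpec n α S) (hαβ : α * β = 1) (hba : β = (a : ℝ) - α)
    (hα2 : α * α = (a : ℝ) * α - 1) (hβ2 : β * β = (a : ℝ) * β - 1) :
    ∀ g, Good n α β S g := by
  set K : Subgroup (BraidGroup n) :=
    { carrier := {g | Good n α β S g ∧ Good n α β S g⁻¹}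
      one_mem' := ⟨good_one, by rw [inv_one]; exact good_one⟩
      mul_mem' := fun {x y} hx hy => ⟨good_mul hα2 hβ2 hx.1 hy.1, by
        rw [_root_.mul_inv_rev]; exact good_mul hα2 hβ2 hy.2 hx.2⟩
      inv_mem' := fun {x} hx => ⟨hx.2, by rw [inv_inv]; exact hx.1⟩ } with hK
  have hmem : ∀ g, g ∈ K := by
    have hle : Subgroup.closure
        (Set.range (PresentedGroup.of : Fin (n-1) → BraidGroup n)) ≤ K := by
      rw [Subgroup.closure_le]
      rintro _ ⟨i, rfl⟩
      exact ⟨good_of hS hαβ i, good_of_inv hS hαβ hba i⟩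
    rw [PresentedGroup.closure_range_of] at hle
    exact fun g => hle (Subgroup.mem_top g)
  exact fun g => (hmem g).1

end Induction

end BurauDisc





open BurauDisc in
theorem burau_discrete_at_quadratic_integer (a : ℤ) (ha : 2 < |a|)
    (α : ℝ) (hα : α ^ 2 - (a : ℝ) * α + 1 = 0)
    (n : ℕ) (hn : 2 ≤ n)
    (S : BraidGroup n →* GL (Fin (n - 1)) ℝ) (hS : IsBurauSpec n α S) :
    DiscreteTopology ↥S.range := by
  classical
  obtain ⟨ha2, ham2⟩ : a ≠ 2 ∧ a ≠ -2 := by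
    rcases lt_abs.1 ha with h | h <;> constructor <;> omega
  set β : ℝ := (a : ℝ) - α with hba
  have hαβ : α * β = 1 := by rw [hba]; linear_combination -hα
  have hα2 : α * α = (a : ℝ) * α - 1 := by linear_combination hα
  have hβ2 : β * β = (a : ℝ) * β - 1 := by rw [hba]; linear_combination hα
  have hα1 : α + 1 ≠ 0 := by
    intro h
    have hα' : α = -1 := by linarith
    rw [hα'] at hα
    have h2 : (a : ℝ) = -2 := by nlinarith [hα]
    have : a = -2 := by exact_mod_cast h2
    exact ham2 this
  have hαβne : α - β ≠ 0 := by
    intro h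
    have hβα : β = α := by linarith
    rw [hβα] at hαβ
    rcases mul_self_eq_one_iff.1 hαβ with h2 | h2
    · rw [h2] at hα
      have : (a : ℝ) = 2 := by nlinarith [hα]
      exact ha2 (by exact_mod_cast this)
    · rw [h2] at hα
      have : (a : ℝ) = -2 := by nlinarith [hα]
      exact ham2 (by exact_mod_cast this)
  have hm1 : 1 ≤ n - 1 := by omega
  have hdet : (BurauDisc.Jmat (n-1) α).det ≠ 0 := BurauDisc.Jmat_det_ne_zero hα1 hm1
  have hJinv : (BurauDisc.Jmat (n-1) α)⁻¹ * BurauDisc.Jmat (n-1) α = 1 :=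
    Matrix.nonsing_inv_mul _ (isUnit_iff_ne_zero.2 hdet)
  have hgood := BurauDisc.good_all (a := a) hS hαβ hba hα2 hβ2
  set F : GL (Fin (n-1)) ℝ → Matrix (Fin (n-1)) (Fin (n-1)) ℝ :=
    fun M => (BurauDisc.Jmat (n-1) α)⁻¹ *
      ((↑(M⁻¹) : Matrix (Fin (n-1)) (Fin (n-1)) ℝ)ᵀ * BurauDisc.Jmat (n-1) α) with hF
  set QQ : GL (Fin (n-1)) ℝ → Matrix (Fin (n-1)) (Fin (n-1)) ℝ :=
    fun M => (α - β)⁻¹ • ((↑M : Matrix (Fin (n-1)) (Fin (n-1)) ℝ) - F M) with hQQdef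
  set PP : GL (Fin (n-1)) ℝ → Matrix (Fin (n-1)) (Fin (n-1)) ℝ :=
    fun M => (↑M : Matrix (Fin (n-1)) (Fin (n-1)) ℝ) - α • QQ M with hPPdef
  have hFcont : Continuous F :=
    continuous_const.matrix_mul
      ((Units.continuous_coe_inv.matrix_transpose).matrix_mul continuous_const)
  have hQQcont : Continuous QQ := (Units.continuous_val.sub hFcont).const_smul ((α - β)⁻¹)
  have hPPcont : Continuous PP := Units.continuous_val.sub (hQQcont.const_smul α)
  have hkey : ∀ g : BraidGroup n, BurauDisc.IntMat (PP (S g)) ∧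
      BurauDisc.IntMat (QQ (S g)) ∧
      (↑(S g) : Matrix (Fin (n-1)) (Fin (n-1)) ℝ) = PP (S g) + α • QQ (S g) := by
    intro g
    obtain ⟨P, Q, hP, hQ, hd, hc⟩ := hgood g
    have hFv : F (S g) = P + β • Q := by
      rw [hF]
      simp only
      rw [hc, ← mul_assoc, hJinv, one_mul]
    have hQQv : QQ (S g) = Q := by
      rw [hQQdef]
      simp only
      rw [hd, hFv]
      have he : (P + α • Q) - (P + β • Q) = (α - β) • Q := by module
      rw [he, smul_smul, inv_mul_cancel₀ hαβne, one_smul]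
    have hPPv : PP (S g) = P := by
      rw [hPPdef]
      simp only
      rw [hQQv, hd, add_sub_cancel_right]
    exact ⟨hPPv ▸ hP, hQQv ▸ hQ, by rw [hPPv, hQQv, hd]⟩
  set U : Set (GL (Fin (n-1)) ℝ) :=
    {M | ∀ r c, |PP M r c - (1 : Matrix (Fin (n-1)) (Fin (n-1)) ℝ) r c| < 1/2 ∧
      |QQ M r c| < 1/2} with hU
  have hUopen : IsOpen U := by
    have hUeq : U = ⋂ r : Fin (n-1), ⋂ c : Fin (n-1),
        ({M | |PP M r c - (1 : Matrix (Fin (n-1)) (Fin (n-1)) ℝ) r c| < 1/2} ∩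
          {M | |QQ M r c| < 1/2}) := by
      ext M
      simp only [hU, Set.mem_setOf_eq, Set.mem_iInter, Set.mem_inter_iff] <;> tauto
    rw [hUeq]
    refine isOpen_iInter_of_finite fun r => isOpen_iInter_of_finite fun c =>
      IsOpen.inter ?_ ?_
    · exact isOpen_lt (((hPPcont.matrix_elem r c).sub continuous_const).abs)
        continuous_const
    · exact isOpen_lt ((hQQcont.matrix_elem r c).abs) continuous_const
  have hF1 : F 1 = 1 := by
    rw [hF]
    simp only
    rw [inv_one, Units.val_one, transpose_one, one_mul, hJinv]
  have hQ1 : QQ 1 = 0 := by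
    rw [hQQdef]; simp only
    rw [hF1, Units.val_one, sub_self, smul_zero]
  have hP1 : PP 1 = (1 : Matrix (Fin (n-1)) (Fin (n-1)) ℝ) := by
    rw [hPPdef]; simp only
    rw [hQ1, smul_zero, sub_zero, Units.val_one]
  have h1U : (1 : GL (Fin (n-1)) ℝ) ∈ U := by
    intro r c
    rw [hP1, hQ1]
    norm_num
  rw [discreteTopology_iff_isOpen_singleton_one]
  have hpre : (Subtype.val ⁻¹' U : Set ↥S.range) = {1} := by
    ext x
    obtain ⟨M, hM⟩ := x
    simp only [Set.mem_preimage, Set.mem_singleton_iff]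
    constructor
    · intro hMU
      obtain ⟨g, hg⟩ := MonoidHom.mem_range.mp hM
      obtain ⟨hPint, hQint, hdec⟩ := hkey g
      rw [hg] at hPint hQint hdec
      have hint : ∀ (z w : ℤ) (x : ℝ), x = z → |x - (w : ℝ)| < 1/2 → x = (w : ℝ) := by
        intro z w x hx hb
        rw [hx] at hb ⊢
        have hzw : z = w := by
          by_contra hzz
          have h2 : z - w ≠ 0 := fun hc => hzz (by omega)
          have h1 : (1 : ℝ) ≤ |(z : ℝ) - w| := by
            have h3 := Int.one_le_abs h2
            calc (1:ℝ) = ((1:ℤ):ℝ) := by norm_num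
              _ ≤ ((|z - w| : ℤ) : ℝ) := by exact_mod_cast h3
              _ = |(z:ℝ) - w| := by push_cast; ring
          linarith
        rw [hzw]
      have hQ0 : QQ M = 0 := by
        funext r c
        obtain ⟨z, hz⟩ := hQint r c
        have := hint z 0 (QQ M r c) hz (by simpa using (hMU r c).2)
        simpa using this
      have hPid : PP M = (1 : Matrix (Fin (n-1)) (Fin (n-1)) ℝ) := by
        funext r c
        obtain ⟨z, hz⟩ := hPint r c
        have hb : |PP M r c - (1 : Matrix (Fin (n-1)) (Fin (n-1)) ℝ) r c| < 1/2 :=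
          (hMU r c).1
        by_cases hrc : r = c
        · subst hrc
          rw [Matrix.one_apply_eq] at hb ⊢
          have := hint z 1 (PP M r r) hz (by simpa using hb)
          simpa using this
        · rw [Matrix.one_apply_ne hrc] at hb ⊢
          have := hint z 0 (PP M r c) hz (by simpa using hb)
          simpa using this
      have : (↑M : Matrix (Fin (n-1)) (Fin (n-1)) ℝ) = 1 := by
        rw [hdec, hPid, hQ0, smul_zero, add_zero]
      exact Subtype.ext (Units.ext this)
    · intro h
      have hM1 : M = 1 := by simpa using congrArg Subtype.val h
      show M ∈ U
      rw [hM1]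
      exact h1U
  rw [← hpre]
  exact hUopen.preimage continuous_subtype_val
end

section
/- The image of the Burau specialization S⁴_{t₀} : B₄ → GL₃(ℝ) at t₀ = (3+√5)/2 is a discrete subgroup of GL₃(ℝ). -/
open Matrix
open scoped MatrixGroups

/-- The braid group on four strands. -/
abbrev B4 : Type := BraidGroup 4

/-- The standard generators of `B4`. -/
def b4 (i : Fin 3) : B4 := PresentedGroup.of i

/-- `S` is the Burau specialization of `B4` at the real parameter `t₀`. -/
def IsBurau4 (t₀ : ℝ) (S : B4 →* GL (Fin 3) ℝ) : Prop :=
  (S (b4 0) : Matrix (Fin 3) (Fin 3) ℝ) = !![-t₀, 1, 0; 0, 1, 0; 0, 0, 1] ∧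
  (S (b4 1) : Matrix (Fin 3) (Fin 3) ℝ) = !![1, 0, 0; t₀, -t₀, 1; 0, 0, 1] ∧
  (S (b4 2) : Matrix (Fin 3) (Fin 3) ℝ) = !![1, 0, 0; 0, 1, 0; 0, t₀, -t₀]

namespace BurauGolden

noncomputable def gphi : ℝ := (1 + Real.sqrt 5) / 2
noncomputable def gpsi : ℝ := (1 - Real.sqrt 5) / 2

lemma hs2 : Real.sqrt 5 ^ 2 = 5 := Real.sq_sqrt (by norm_num)
lemma hs3 : Real.sqrt 5 ^ 3 = 5 * Real.sqrt 5 := by rw [pow_succ, hs2]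
lemma hs2' : Real.sqrt 5 * Real.sqrt 5 = 5 := by nlinarith [hs2]

lemma gphi_sq : gphi * gphi = gphi + 1 := by
  unfold gphi; linear_combination (1/4) * hs2'
lemma gpsi_sq : gpsi * gpsi = gpsi + 1 := by
  unfold gpsi; linear_combination (1/4) * hs2'

/-- The Squier-type pairing matrix. -/
noncomputable def Jm : Matrix (Fin 3) (Fin 3) ℝ :=
  !![10, -5 - Real.sqrt 5, 0;
     -5 + Real.sqrt 5, 10, -5 - Real.sqrt 5;
     0, -5 + Real.sqrt 5, 10]

/-- `Km` is `60 • Jm⁻¹`. -/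
noncomputable def Km : Matrix (Fin 3) (Fin 3) ℝ :=
  !![8, 5 + Real.sqrt 5, 3 + Real.sqrt 5;
     5 - Real.sqrt 5, 10, 5 + Real.sqrt 5;
     3 - Real.sqrt 5, 5 - Real.sqrt 5, 8]

lemma KJ : Km * Jm = (60 : ℝ) • 1 := by
  ext i j
  fin_cases i <;> fin_cases j <;>
    simp [Km, Jm, Matrix.mul_apply, Fin.sum_univ_three, Matrix.one_apply,
      Matrix.vecHead, Matrix.vecTail] <;>
    ring_nf <;>
    linarith [hs2, hs3]

/-- Entrywise integer-to-real cast of matrices. -/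
def intM (a : Matrix (Fin 3) (Fin 3) ℤ) : Matrix (Fin 3) (Fin 3) ℝ :=
  a.map (Int.castRingHom ℝ)

lemma intM_mul (a b : Matrix (Fin 3) (Fin 3) ℤ) : intM (a * b) = intM a * intM b :=
  Matrix.map_mul

lemma intM_add (a b : Matrix (Fin 3) (Fin 3) ℤ) : intM (a + b) = intM a + intM b :=
  Matrix.map_add _ (by simp) _ _

lemma intM_one : intM 1 = 1 :=
  Matrix.map_one _ (by simp) (by simp)

/-- The invariance/integrality predicate preserved by the Burau image. -/
def Good (A : GL (Fin 3) ℝ) : Prop :=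
  ∃ a b : Matrix (Fin 3) (Fin 3) ℤ,
    (A : Matrix (Fin 3) (Fin 3) ℝ) = intM a + gphi • intM b ∧
    (A : Matrix (Fin 3) (Fin 3) ℝ)ᵀ * Jm * (intM a + gpsi • intM b) = Jm

lemma expand_mul (x : ℝ) (hx : x * x = x + 1) (P Q R T : Matrix (Fin 3) (Fin 3) ℝ) :
    (P + x • Q) * (R + x • T) = (P * R + Q * T) + x • (P * T + Q * R + Q * T) := by
  simp only [add_mul, mul_add, smul_mul_assoc, mul_smul_comm, smul_smul, hx, add_smul,
    one_smul, smul_add]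
  abel

lemma good_one : Good 1 := by
  refine ⟨1, 0, ?_, ?_⟩ <;>
    simp [intM_one, intM, Units.val_one]

lemma good_mul {A B : GL (Fin 3) ℝ} (hA : Good A) (hB : Good B) : Good (A * B) := by
  obtain ⟨a, b, hA1, hA2⟩ := hA
  obtain ⟨c, d, hB1, hB2⟩ := hB
  refine ⟨a * c + b * d, a * d + b * c + b * d, ?_, ?_⟩
  · rw [Units.val_mul, hA1, hB1, expand_mul gphi gphi_sq]
    simp only [intM_add, intM_mul]
  · have hσ : intM (a * c + b * d) + gpsi • intM (a * d + b * c + b * d)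
        = (intM a + gpsi • intM b) * (intM c + gpsi • intM d) := by
      rw [expand_mul gpsi gpsi_sq]
      simp only [intM_add, intM_mul]
    rw [hσ, Units.val_mul, Matrix.transpose_mul]
    have h : (B : Matrix (Fin 3) (Fin 3) ℝ)ᵀ * (A : Matrix (Fin 3) (Fin 3) ℝ)ᵀ * Jm *
        ((intM a + gpsi • intM b) * (intM c + gpsi • intM d))
        = (B : Matrix (Fin 3) (Fin 3) ℝ)ᵀ *
          (((A : Matrix (Fin 3) (Fin 3) ℝ)ᵀ * Jm * (intM a + gpsi • intM b)) *
            (intM c + gpsi • intM d)) := by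
      simp only [mul_assoc]
    rw [h, hA2, ← mul_assoc, hB2]

lemma coe_inv_of (u : GL (Fin 3) ℝ) (N : Matrix (Fin 3) (Fin 3) ℝ)
    (h : (u : Matrix (Fin 3) (Fin 3) ℝ) * N = 1) :
    ((u⁻¹ : GL (Fin 3) ℝ) : Matrix (Fin 3) (Fin 3) ℝ) = N := by
  calc ((u⁻¹ : GL (Fin 3) ℝ) : Matrix (Fin 3) (Fin 3) ℝ)
      = ((u⁻¹ : GL (Fin 3) ℝ) : Matrix (Fin 3) (Fin 3) ℝ) *
        ((u : Matrix (Fin 3) (Fin 3) ℝ) * N) := by rw [h, mul_one]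
    _ = (((u⁻¹ * u : GL (Fin 3) ℝ)) : Matrix (Fin 3) (Fin 3) ℝ) * N := by
        rw [Units.val_mul, mul_assoc]
    _ = N := by simp

/- Generator 0 -/
lemma good_g0 (u : GL (Fin 3) ℝ)
    (h : (u : Matrix (Fin 3) (Fin 3) ℝ)
      = !![-((3 + Real.sqrt 5) / 2), 1, 0; 0, 1, 0; 0, 0, 1]) : Good u := by
  refine ⟨!![-1, 1, 0; 0, 1, 0; 0, 0, 1], !![-1, 0, 0; 0, 0, 0; 0, 0, 0], ?_, ?_⟩ <;>
    (rw [h]; ext i j; fin_cases i <;> fin_cases j <;>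
      simp [intM, gphi, gpsi, Jm, Matrix.mul_apply, Fin.sum_univ_three,
        Matrix.vecHead, Matrix.vecTail] <;>
      ring_nf <;>
      linarith [hs2, hs3])

lemma good_g1 (u : GL (Fin 3) ℝ)
    (h : (u : Matrix (Fin 3) (Fin 3) ℝ)
      = !![1, 0, 0; (3 + Real.sqrt 5) / 2, -((3 + Real.sqrt 5) / 2), 1; 0, 0, 1]) : Good u := by
  refine ⟨!![1, 0, 0; 1, -1, 1; 0, 0, 1], !![0, 0, 0; 1, -1, 0; 0, 0, 0], ?_, ?_⟩ <;>
    (rw [h]; ext i j; fin_cases i <;> fin_cases j <;>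
      simp [intM, gphi, gpsi, Jm, Matrix.mul_apply, Fin.sum_univ_three,
        Matrix.vecHead, Matrix.vecTail] <;>
      ring_nf <;>
      linarith [hs2, hs3])

lemma good_g2 (u : GL (Fin 3) ℝ)
    (h : (u : Matrix (Fin 3) (Fin 3) ℝ)
      = !![1, 0, 0; 0, 1, 0; 0, (3 + Real.sqrt 5) / 2, -((3 + Real.sqrt 5) / 2)]) : Good u := by
  refine ⟨!![1, 0, 0; 0, 1, 0; 0, 1, -1], !![0, 0, 0; 0, 0, 0; 0, 1, -1], ?_, ?_⟩ <;>
    (rw [h]; ext i j; fin_cases i <;> fin_cases j <;>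
      simp [intM, gphi, gpsi, Jm, Matrix.mul_apply, Fin.sum_univ_three,
        Matrix.vecHead, Matrix.vecTail] <;>
      ring_nf <;>
      linarith [hs2, hs3])

/- Inverses of the generators -/
lemma coe_inv_g0 (u : GL (Fin 3) ℝ)
    (h : (u : Matrix (Fin 3) (Fin 3) ℝ)
      = !![-((3 + Real.sqrt 5) / 2), 1, 0; 0, 1, 0; 0, 0, 1]) :
    ((u⁻¹ : GL (Fin 3) ℝ) : Matrix (Fin 3) (Fin 3) ℝ)
      = !![-((3 - Real.sqrt 5) / 2), (3 - Real.sqrt 5) / 2, 0; 0, 1, 0; 0, 0, 1] := by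
  apply coe_inv_of
  rw [h]; ext i j
  fin_cases i <;> fin_cases j <;>
    simp [Matrix.mul_apply, Fin.sum_univ_three, Matrix.one_apply,
      Matrix.vecHead, Matrix.vecTail] <;>
    ring_nf <;>
    linarith [hs2, hs3]

lemma coe_inv_g1 (u : GL (Fin 3) ℝ)
    (h : (u : Matrix (Fin 3) (Fin 3) ℝ)
      = !![1, 0, 0; (3 + Real.sqrt 5) / 2, -((3 + Real.sqrt 5) / 2), 1; 0, 0, 1]) :
    ((u⁻¹ : GL (Fin 3) ℝ) : Matrix (Fin 3) (Fin 3) ℝ)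
      = !![1, 0, 0; 1, -((3 - Real.sqrt 5) / 2), (3 - Real.sqrt 5) / 2; 0, 0, 1] := by
  apply coe_inv_of
  rw [h]; ext i j
  fin_cases i <;> fin_cases j <;>
    simp [Matrix.mul_apply, Fin.sum_univ_three, Matrix.one_apply,
      Matrix.vecHead, Matrix.vecTail] <;>
    ring_nf <;>
    linarith [hs2, hs3]

lemma coe_inv_g2 (u : GL (Fin 3) ℝ)
    (h : (u : Matrix (Fin 3) (Fin 3) ℝ)
      = !![1, 0, 0; 0, 1, 0; 0, (3 + Real.sqrt 5) / 2, -((3 + Real.sqrt 5) / 2)]) :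
    ((u⁻¹ : GL (Fin 3) ℝ) : Matrix (Fin 3) (Fin 3) ℝ)
      = !![1, 0, 0; 0, 1, 0; 0, 1, -((3 - Real.sqrt 5) / 2)] := by
  apply coe_inv_of
  rw [h]; ext i j
  fin_cases i <;> fin_cases j <;>
    simp [Matrix.mul_apply, Fin.sum_univ_three, Matrix.one_apply,
      Matrix.vecHead, Matrix.vecTail] <;>
    ring_nf <;>
    linarith [hs2, hs3]

lemma good_g0_inv (u : GL (Fin 3) ℝ)
    (h : (u : Matrix (Fin 3) (Fin 3) ℝ)
      = !![-((3 - Real.sqrt 5) / 2), (3 - Real.sqrt 5) / 2, 0; 0, 1, 0; 0, 0, 1]) : Good u := by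
  refine ⟨!![-2, 2, 0; 0, 1, 0; 0, 0, 1], !![1, -1, 0; 0, 0, 0; 0, 0, 0], ?_, ?_⟩ <;>
    (rw [h]; ext i j; fin_cases i <;> fin_cases j <;>
      simp [intM, gphi, gpsi, Jm, Matrix.mul_apply, Fin.sum_univ_three,
        Matrix.vecHead, Matrix.vecTail] <;>
      ring_nf <;>
      linarith [hs2, hs3])

lemma good_g1_inv (u : GL (Fin 3) ℝ)
    (h : (u : Matrix (Fin 3) (Fin 3) ℝ)
      = !![1, 0, 0; 1, -((3 - Real.sqrt 5) / 2), (3 - Real.sqrt 5) / 2; 0, 0, 1]) : Good u := by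
  refine ⟨!![1, 0, 0; 1, -2, 2; 0, 0, 1], !![0, 0, 0; 0, 1, -1; 0, 0, 0], ?_, ?_⟩ <;>
    (rw [h]; ext i j; fin_cases i <;> fin_cases j <;>
      simp [intM, gphi, gpsi, Jm, Matrix.mul_apply, Fin.sum_univ_three,
        Matrix.vecHead, Matrix.vecTail] <;>
      ring_nf <;>
      linarith [hs2, hs3])

lemma good_g2_inv (u : GL (Fin 3) ℝ)
    (h : (u : Matrix (Fin 3) (Fin 3) ℝ)
      = !![1, 0, 0; 0, 1, 0; 0, 1, -((3 - Real.sqrt 5) / 2)]) : Good u := by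
  refine ⟨!![1, 0, 0; 0, 1, 0; 0, 1, -2], !![0, 0, 0; 0, 0, 0; 0, 0, 1], ?_, ?_⟩ <;>
    (rw [h]; ext i j; fin_cases i <;> fin_cases j <;>
      simp [intM, gphi, gpsi, Jm, Matrix.mul_apply, Fin.sum_univ_three,
        Matrix.vecHead, Matrix.vecTail] <;>
      ring_nf <;>
      linarith [hs2, hs3])

end BurauGolden

open BurauGolden in
theorem burau_B4_discrete_at_golden
    (S : B4 →* GL (Fin 3) ℝ) (hS : IsBurau4 ((3 + Real.sqrt 5) / 2) S) :
    DiscreteTopology ↥S.range := by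
  obtain ⟨hS0, hS1, hS2⟩ := hS
  have good_all : ∀ g : B4, Good (S g) := by
    intro g
    obtain ⟨w, rfl⟩ := PresentedGroup.mk_surjective _ g
    induction w using FreeGroup.induction_on with
    | C1 => rw [_root_.map_one, _root_.map_one]; exact good_one
    | of i =>
        fin_cases i
        · exact good_g0 _ hS0
        · exact good_g1 _ hS1
        · exact good_g2 _ hS2
    | inv_of i _ =>
        rw [_root_.map_inv, _root_.map_inv]
        fin_cases i
        · exact good_g0_inv _ (coe_inv_g0 _ hS0)
        · exact good_g1_inv _ (coe_inv_g1 _ hS1)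
        · exact good_g2_inv _ (coe_inv_g2 _ hS2)
    | mul x y hx hy =>
        rw [_root_.map_mul, _root_.map_mul]
        exact good_mul hx hy
  -- the open neighbourhood of 1 isolating the identity
  set U : Set (GL (Fin 3) ℝ) :=
    ⋂ p : Fin 3 × Fin 3,
      {A : GL (Fin 3) ℝ |
        |(A : Matrix (Fin 3) (Fin 3) ℝ) p.1 p.2 - (1 : Matrix (Fin 3) (Fin 3) ℝ) p.1 p.2| < 1/2 ∧
        |(Km * ((A⁻¹ : GL (Fin 3) ℝ) : Matrix (Fin 3) (Fin 3) ℝ)ᵀ * Jm) p.1 p.2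
          - 60 * (1 : Matrix (Fin 3) (Fin 3) ℝ) p.1 p.2| < 30} with hU
  have hcont2 : Continuous fun A : GL (Fin 3) ℝ =>
      Km * ((A⁻¹ : GL (Fin 3) ℝ) : Matrix (Fin 3) (Fin 3) ℝ)ᵀ * Jm :=
    (continuous_const.matrix_mul
      ((Units.continuous_val.comp continuous_inv).matrix_transpose)).matrix_mul
      continuous_const
  have hUopen : IsOpen U := by
    rw [hU]
    refine isOpen_iInter_of_finite fun p => IsOpen.inter ?_ ?_
    · exact isOpen_lt (Continuous.abs (Continuous.sub
        (Units.continuous_val.matrix_elem p.1 p.2) continuous_const)) continuous_const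
    · exact isOpen_lt (Continuous.abs (Continuous.sub
        (hcont2.matrix_elem p.1 p.2) continuous_const)) continuous_const
  have hone : (1 : GL (Fin 3) ℝ) ∈ U := by
    rw [hU]
    refine Set.mem_iInter.2 fun p => ⟨?_, ?_⟩
    · simp
    · have h1 : ((((1 : GL (Fin 3) ℝ))⁻¹ : GL (Fin 3) ℝ) : Matrix (Fin 3) (Fin 3) ℝ)ᵀ
          = 1 := by simp
      simp only [Set.mem_setOf_eq, h1, Matrix.mul_one, KJ]
      rw [Matrix.smul_apply]
      simp only [Matrix.one_apply, smul_eq_mul]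
      split <;> norm_num
  -- the isolation property
  have hsqrt5_gt : (2 : ℝ) < Real.sqrt 5 := by
    nlinarith [Real.sqrt_nonneg 5, hs2]
  have hone_cast : ∀ i j : Fin 3, (((1 : Matrix (Fin 3) (Fin 3) ℤ) i j : ℤ) : ℝ)
      = (1 : Matrix (Fin 3) (Fin 3) ℝ) i j := by
    intro i j
    by_cases hij : i = j <;> simp [Matrix.one_apply, hij]
  have hKey : ∀ A : GL (Fin 3) ℝ, Good A → A ∈ U → A = 1 := by
    rintro A ⟨a, b, h1, h2⟩ hAU
    have hinv : ((A⁻¹ : GL (Fin 3) ℝ) : Matrix (Fin 3) (Fin 3) ℝ)ᵀ *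
        (A : Matrix (Fin 3) (Fin 3) ℝ)ᵀ = 1 := by
      rw [← Matrix.transpose_mul, ← Units.val_mul, mul_inv_cancel]
      simp
    have hσ : Km * ((A⁻¹ : GL (Fin 3) ℝ) : Matrix (Fin 3) (Fin 3) ℝ)ᵀ * Jm
        = (60 : ℝ) • (intM a + gpsi • intM b) := by
      conv_lhs => rw [← h2]
      have h3 : Km * ((A⁻¹ : GL (Fin 3) ℝ) : Matrix (Fin 3) (Fin 3) ℝ)ᵀ *
          ((A : Matrix (Fin 3) (Fin 3) ℝ)ᵀ * Jm * (intM a + gpsi • intM b))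
          = Km * (((A⁻¹ : GL (Fin 3) ℝ) : Matrix (Fin 3) (Fin 3) ℝ)ᵀ *
              (A : Matrix (Fin 3) (Fin 3) ℝ)ᵀ) * (Jm * (intM a + gpsi • intM b)) := by
        simp only [mul_assoc]
      rw [h3, hinv, mul_one, ← mul_assoc, KJ, Matrix.smul_mul, Matrix.one_mul]
    have hU' := Set.mem_iInter.1 hAU
    have hent : ∀ i j : Fin 3, a i j = (1 : Matrix (Fin 3) (Fin 3) ℤ) i j ∧ b i j = 0 := by
      intro i j
      obtain ⟨e1, e2⟩ := hU' (i, j)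
      simp only [Set.mem_setOf_eq] at e1 e2
      rw [h1] at e1
      rw [hσ] at e2
      simp only [Matrix.add_apply, Matrix.smul_apply, smul_eq_mul] at e1 e2
      set x : ℝ := (intM a) i j with hx
      set y : ℝ := (intM b) i j with hy
      set d : ℝ := (1 : Matrix (Fin 3) (Fin 3) ℝ) i j with hd
      have e2' : |x + gpsi * y - d| < 1/2 := by
        rw [abs_lt] at e2 ⊢
        constructor <;> nlinarith [e2.1, e2.2]
      have hyb : |y| * Real.sqrt 5 < 1 := by
        have hdiff : (x + gphi * y - d) - (x + gpsi * y - d) = Real.sqrt 5 * y := by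
          unfold gphi gpsi; ring
        have habs : |Real.sqrt 5 * y| < 1 := by
          calc |Real.sqrt 5 * y| = |(x + gphi * y - d) - (x + gpsi * y - d)| := by
                rw [hdiff]
            _ ≤ |x + gphi * y - d| + |x + gpsi * y - d| := abs_sub _ _
            _ < 1 := by linarith [e1, e2']
        rw [abs_mul, abs_of_nonneg (Real.sqrt_nonneg 5)] at habs
        linarith [habs]
      have hb0 : b i j = 0 := by
        by_contra hne
        have h1le : (1 : ℝ) ≤ |y| := by
          have hz : (1 : ℤ) ≤ |b i j| := Int.one_le_abs hne
          have hz' : ((1 : ℤ) : ℝ) ≤ ((|b i j| : ℤ) : ℝ) := Int.cast_le.2 hz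
          simpa [hy, intM, Matrix.map_apply, Int.cast_abs] using hz'
        nlinarith [hyb, hsqrt5_gt, abs_nonneg y]
      have hy0 : y = 0 := by
        rw [hy]; simp [intM, Matrix.map_apply, hb0]
      have ha : a i j = (1 : Matrix (Fin 3) (Fin 3) ℤ) i j := by
        have hxd : |x - d| < 1 := by
          rw [hy0] at e1
          rw [abs_lt] at e1 ⊢
          constructor <;> nlinarith [e1.1, e1.2]
        have hcast : x - d = ((a i j - (1 : Matrix (Fin 3) (Fin 3) ℤ) i j : ℤ) : ℝ) := by
          rw [hx, hd]
          push_cast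
          rw [hone_cast i j]
          simp [intM, Matrix.map_apply]
        rw [hcast] at hxd
        have habs2 : |a i j - (1 : Matrix (Fin 3) (Fin 3) ℤ) i j| < 1 := by
          exact_mod_cast hxd
        have := Int.abs_lt_one_iff.mp habs2
        omega
      exact ⟨ha, hb0⟩
    have hA1 : (A : Matrix (Fin 3) (Fin 3) ℝ) = 1 := by
      rw [h1]
      ext i j
      obtain ⟨ha, hb⟩ := hent i j
      simp [intM, Matrix.map_apply, ha, hb, hone_cast i j, Matrix.add_apply]
    exact Units.ext hA1
  -- conclude discreteness
  refine discreteTopology_iff_isOpen_singleton.mpr fun x => ?_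
  have hxset : ({x} : Set ↥S.range)
      = Subtype.val ⁻¹' ((fun g => (x : GL (Fin 3) ℝ) * g) '' U) := by
    ext y
    simp only [Set.mem_singleton_iff, Set.mem_preimage, Set.mem_image]
    constructor
    · rintro rfl
      exact ⟨1, hone, mul_one _⟩
    · rintro ⟨u, hu, huy⟩
      have hum : u ∈ S.range := by
        have hxy : u = (x : GL (Fin 3) ℝ)⁻¹ * (y : GL (Fin 3) ℝ) := by
          rw [← huy]; group
        rw [hxy]
        exact mul_mem (inv_mem x.2) y.2
      obtain ⟨g, hg⟩ := hum
      have hgood : Good u := hg ▸ good_all g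
      have hu1 : u = 1 := hKey u hgood hu
      apply Subtype.ext
      rw [← huy, hu1, mul_one]
  rw [hxset]
  exact (((Homeomorph.mulLeft (x : GL (Fin 3) ℝ)).isOpen_image).mpr hUopen).preimage
    continuous_subtype_val
end

section
/- The subgroup N of B₃ generated by a₁ = σ₁⁻¹σ₂ and a₂ = σ₂σ₁⁻¹ is a normal subgroup of B₃, and N is a free group of rank 2, freely generated by a₁ and a₂. -/
open Matrix
open scoped MatrixGroups

namespace N3Aux

open Pointwise

/-! ### Generic consequences of the braid relation -/

section Ident

variable {G : Type*} [Group G] {s0 s1 : G} (h : s0 * s1 * s0 = s1 * s0 * s1)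

include h

private lemma rel2 : s1 * s0 * s1 * (s0 * s1 * s0)⁻¹ = 1 := by rw [h]; group

private lemma I1 : s0⁻¹ * (s0⁻¹ * s1) * s0 = (s0⁻¹ * s1) * (s1 * s0⁻¹)⁻¹ := by
  rw [← mul_inv_eq_one]
  calc s0⁻¹ * (s0⁻¹ * s1) * s0 * ((s0⁻¹ * s1) * (s1 * s0⁻¹)⁻¹)⁻¹
      = (s0⁻¹ * s0⁻¹) * (s1 * s0 * s1 * (s0 * s1 * s0)⁻¹) * (s0 * s0) := by group
    _ = 1 := by rw [rel2 h]; group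

private lemma I2 : s0 * (s1 * s0⁻¹) * s0⁻¹ = (s0⁻¹ * s1)⁻¹ * (s1 * s0⁻¹) := by
  rw [← mul_inv_eq_one]
  calc s0 * (s1 * s0⁻¹) * s0⁻¹ * ((s0⁻¹ * s1)⁻¹ * (s1 * s0⁻¹))⁻¹
      = s1⁻¹ * (s1 * s0 * s1 * (s0 * s1 * s0)⁻¹) * s1 := by group
    _ = 1 := by rw [rel2 h]; group

private lemma I3 : s1 * (s1 * s0⁻¹) * s1⁻¹ = (s1 * s0⁻¹) * (s0⁻¹ * s1)⁻¹ := by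
  rw [← mul_inv_eq_one]
  calc s1 * (s1 * s0⁻¹) * s1⁻¹ * ((s1 * s0⁻¹) * (s0⁻¹ * s1)⁻¹)⁻¹
      = (s1 * s0⁻¹ * s1⁻¹) * (s1 * s0 * s1 * (s0 * s1 * s0)⁻¹) * (s1 * s0⁻¹ * s1⁻¹)⁻¹ := by
        group
    _ = 1 := by rw [rel2 h]; group

private lemma I4 : s1⁻¹ * (s0⁻¹ * s1) * s1 = (s1 * s0⁻¹)⁻¹ * (s0⁻¹ * s1) := by
  rw [← mul_inv_eq_one]
  calc s1⁻¹ * (s0⁻¹ * s1) * s1 * ((s1 * s0⁻¹)⁻¹ * (s0⁻¹ * s1))⁻¹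
      = (s1 * s0 * s1 * s0⁻¹)⁻¹ * (s1 * s0 * s1 * (s0 * s1 * s0)⁻¹) * (s1 * s0 * s1 * s0⁻¹) := by
        group
    _ = 1 := by rw [rel2 h]; group

end Ident

/-! ### The braid relation in `B3` -/

lemma braid_rel : b3 0 * b3 1 * b3 0 = b3 1 * b3 0 * b3 1 := by
  rw [← mul_inv_eq_one]
  have hmem : (FreeGroup.of 0 * FreeGroup.of 1 * FreeGroup.of 0 *
      (FreeGroup.of 1 * FreeGroup.of 0 * FreeGroup.of 1)⁻¹ : FreeGroup (Fin 2)) ∈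
      braidRels (3 - 1) := Or.inl ⟨0, 1, rfl, rfl⟩
  have h1 : (QuotientGroup.mk (FreeGroup.of 0 * FreeGroup.of 1 * FreeGroup.of 0 *
      (FreeGroup.of 1 * FreeGroup.of 0 * FreeGroup.of 1)⁻¹ : FreeGroup (Fin 2)) : B3) = 1 :=
    (QuotientGroup.eq_one_iff _).mpr (Subgroup.subset_normalClosure hmem)
  exact h1

/-! ### The Burau representation at `t₀ = -4` -/

noncomputable def M1 : GL (Fin 2) ℝ :=
  ⟨!![4, 1; 0, 1], !![1/4, -1/4; 0, 1],
    by ext i j; fin_cases i <;> fin_cases j <;>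
      simp [Matrix.mul_apply, Fin.sum_univ_two] <;> norm_num,
    by ext i j; fin_cases i <;> fin_cases j <;>
      simp [Matrix.mul_apply, Fin.sum_univ_two] <;> norm_num⟩

noncomputable def M2 : GL (Fin 2) ℝ :=
  ⟨!![1, 0; -4, 4], !![1, 0; 1, 1/4],
    by ext i j; fin_cases i <;> fin_cases j <;>
      simp [Matrix.mul_apply, Fin.sum_univ_two] <;> norm_num,
    by ext i j; fin_cases i <;> fin_cases j <;>
      simp [Matrix.mul_apply, Fin.sum_univ_two] <;> norm_num⟩

noncomputable def A1 : GL (Fin 2) ℝ :=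
  ⟨!![5/4, -1; -4, 4], !![4, 1; 4, 5/4],
    by ext i j; fin_cases i <;> fin_cases j <;>
      simp [Matrix.mul_apply, Fin.sum_univ_two] <;> norm_num,
    by ext i j; fin_cases i <;> fin_cases j <;>
      simp [Matrix.mul_apply, Fin.sum_univ_two] <;> norm_num⟩

noncomputable def A2 : GL (Fin 2) ℝ :=
  ⟨!![1/4, -1/4; -1, 5], !![5, 1/4; 1, 1/4],
    by ext i j; fin_cases i <;> fin_cases j <;>
      simp [Matrix.mul_apply, Fin.sum_univ_two] <;> norm_num,
    by ext i j; fin_cases i <;> fin_cases j <;>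
      simp [Matrix.mul_apply, Fin.sum_univ_two] <;> norm_num⟩

lemma braidM : M1 * M2 * M1 = M2 * M1 * M2 := by
  refine Units.ext ?_
  simp only [Units.val_mul, M1, M2]
  ext i j
  fin_cases i <;> fin_cases j <;>
    simp [Matrix.mul_apply, Fin.sum_univ_two] <;> norm_num

lemma hrels : ∀ r ∈ braidRels 2, FreeGroup.lift ![M1, M2] r = 1 := by
  rintro r (⟨i, j, hij, rfl⟩ | ⟨i, j, hij, rfl⟩)
  · fin_cases i <;> fin_cases j <;> simp_all
    rw [braidM]
    group
  · exfalso
    have := j.isLt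
    omega

noncomputable def S : B3 →* GL (Fin 2) ℝ := PresentedGroup.toGroup hrels

lemma S_b3_0 : S (b3 0) = M1 := PresentedGroup.toGroup.of hrels

lemma S_b3_1 : S (b3 1) = M2 := PresentedGroup.toGroup.of hrels

lemma S_a₁ : S a₁ = A1 := by
  rw [a₁, _root_.map_mul, map_inv, S_b3_0, S_b3_1]
  refine Units.ext ?_
  have hinv : ((M1⁻¹ : GL (Fin 2) ℝ) : Matrix (Fin 2) (Fin 2) ℝ) = !![1/4, -1/4; 0, 1] := rfl
  rw [Units.val_mul, hinv]
  show _ = (!![5/4, -1; -4, 4] : Matrix (Fin 2) (Fin 2) ℝ)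
  ext i j
  fin_cases i <;> fin_cases j <;>
    simp [M2, Matrix.mul_apply, Fin.sum_univ_two] <;> norm_num

lemma S_a₂ : S a₂ = A2 := by
  rw [a₂, _root_.map_mul, map_inv, S_b3_0, S_b3_1]
  refine Units.ext ?_
  have hinv : ((M1⁻¹ : GL (Fin 2) ℝ) : Matrix (Fin 2) (Fin 2) ℝ) = !![1/4, -1/4; 0, 1] := rfl
  rw [Units.val_mul, hinv]
  show _ = (!![1/4, -1/4; -1, 5] : Matrix (Fin 2) (Fin 2) ℝ)
  ext i j
  fin_cases i <;> fin_cases j <;>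
    simp [M2, Matrix.mul_apply, Fin.sum_univ_two] <;> norm_num

/-! ### The ping-pong action on nonzero vectors -/

abbrev V : Type := {v : Fin 2 → ℝ // v ≠ 0}

noncomputable instance : MulAction (GL (Fin 2) ℝ) V where
  smul g v := ⟨(g : Matrix (Fin 2) (Fin 2) ℝ) *ᵥ v.1, by
    intro hz
    apply v.2
    have h1 : ((g⁻¹ : GL (Fin 2) ℝ) : Matrix (Fin 2) (Fin 2) ℝ) *ᵥ
        (((g : GL (Fin 2) ℝ) : Matrix (Fin 2) (Fin 2) ℝ) *ᵥ v.1) = v.1 := by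
      rw [Matrix.mulVec_mulVec, ← Units.val_mul, inv_mul_cancel, Units.val_one,
        Matrix.one_mulVec]
    rw [hz, Matrix.mulVec_zero] at h1
    exact h1.symm⟩
  one_smul v := Subtype.ext (by
    show ((1 : GL (Fin 2) ℝ) : Matrix (Fin 2) (Fin 2) ℝ) *ᵥ v.1 = v.1
    rw [Units.val_one, Matrix.one_mulVec])
  mul_smul g h v := Subtype.ext (by
    show ((g * h : GL (Fin 2) ℝ) : Matrix (Fin 2) (Fin 2) ℝ) *ᵥ v.1 = _
    rw [Units.val_mul, ← Matrix.mulVec_mulVec]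
    rfl)

lemma smul_coe (g : GL (Fin 2) ℝ) (v : V) :
    (g • v).1 = (g : Matrix (Fin 2) (Fin 2) ℝ) *ᵥ v.1 := rfl

def XS : Fin 2 → Set V :=
  ![{v | 0 ≤ (7 * v.1 1 + 32 * v.1 0) * (-16 * v.1 0 - 9 * v.1 1)},
    {v | (21 * v.1 1 + 100 * v.1 0) * (20 * v.1 0 - v.1 1) ≤ 0}]

def YS : Fin 2 → Set V :=
  ![{v | 0 < (5 * v.1 1 - 4 * v.1 0) * (3 * v.1 0 - v.1 1)},
    {v | 0 < (20 * v.1 1 + v.1 0) * (3 * v.1 0 - 5 * v.1 1)}]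

lemma vec_zero (v : Fin 2 → ℝ) (h0 : v 0 = 0) (h1 : v 1 = 0) : v = 0 := by
  funext i
  fin_cases i
  · simpa using h0
  · simpa using h1


/-! ### Ping-pong set conditions -/

lemma hXne : ∀ i, (XS i).Nonempty := by
  intro i
  fin_cases i
  · refine ⟨⟨![1, -2], fun h => ?_⟩, ?_⟩
    · have := congrFun h 0
      norm_num at this
    · show (0:ℝ) ≤ _
      norm_num
  · refine ⟨⟨![0, 1], fun h => ?_⟩, ?_⟩
    · have := congrFun h 1
      norm_num at this
    · show _ ≤ (0:ℝ)
      norm_num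

lemma disj_X0_X1 : Disjoint (XS 0) (XS 1) := by
  rw [Set.disjoint_left]
  rintro v h1 h2
  simp only [XS, Matrix.cons_val_zero, Matrix.cons_val_one, Matrix.head_cons,
    Set.mem_setOf_eq] at h1 h2
  rcases mul_nonneg_iff.mp h1 with ⟨c1, c2⟩ | ⟨c1, c2⟩ <;>
    rcases mul_nonpos_iff.mp h2 with ⟨d1, d2⟩ | ⟨d1, d2⟩ <;>
    first
      | linarith
      | exact v.2 (vec_zero _ (by linarith) (by linarith))
      | nlinarith

lemma disj_Y0_Y1 : Disjoint (YS 0) (YS 1) := by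
  rw [Set.disjoint_left]
  rintro v h1 h2
  simp only [YS, Matrix.cons_val_zero, Matrix.cons_val_one, Matrix.head_cons,
    Set.mem_setOf_eq] at h1 h2
  rcases mul_pos_iff.mp h1 with ⟨c1, c2⟩ | ⟨c1, c2⟩ <;>
    rcases mul_pos_iff.mp h2 with ⟨d1, d2⟩ | ⟨d1, d2⟩ <;>
    first
      | linarith
      | exact v.2 (vec_zero _ (by linarith) (by linarith))
      | nlinarith

lemma disj_X0_Y0 : Disjoint (XS 0) (YS 0) := by
  rw [Set.disjoint_left]
  rintro v h1 h2
  simp only [XS, YS, Matrix.cons_val_zero, Matrix.cons_val_one, Matrix.head_cons,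
    Set.mem_setOf_eq] at h1 h2
  rcases mul_nonneg_iff.mp h1 with ⟨c1, c2⟩ | ⟨c1, c2⟩ <;>
    rcases mul_pos_iff.mp h2 with ⟨d1, d2⟩ | ⟨d1, d2⟩ <;>
    first
      | linarith
      | exact v.2 (vec_zero _ (by linarith) (by linarith))
      | nlinarith

lemma disj_X0_Y1 : Disjoint (XS 0) (YS 1) := by
  rw [Set.disjoint_left]
  rintro v h1 h2
  simp only [XS, YS, Matrix.cons_val_zero, Matrix.cons_val_one, Matrix.head_cons,
    Set.mem_setOf_eq] at h1 h2
  rcases mul_nonneg_iff.mp h1 with ⟨c1, c2⟩ | ⟨c1, c2⟩ <;>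
    rcases mul_pos_iff.mp h2 with ⟨d1, d2⟩ | ⟨d1, d2⟩ <;>
    first
      | linarith
      | exact v.2 (vec_zero _ (by linarith) (by linarith))
      | nlinarith

lemma disj_X1_Y0 : Disjoint (XS 1) (YS 0) := by
  rw [Set.disjoint_left]
  rintro v h1 h2
  simp only [XS, YS, Matrix.cons_val_zero, Matrix.cons_val_one, Matrix.head_cons,
    Set.mem_setOf_eq] at h1 h2
  rcases mul_nonpos_iff.mp h1 with ⟨c1, c2⟩ | ⟨c1, c2⟩ <;>
    rcases mul_pos_iff.mp h2 with ⟨d1, d2⟩ | ⟨d1, d2⟩ <;>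
    first
      | linarith
      | exact v.2 (vec_zero _ (by linarith) (by linarith))
      | nlinarith

lemma disj_X1_Y1 : Disjoint (XS 1) (YS 1) := by
  rw [Set.disjoint_left]
  rintro v h1 h2
  simp only [XS, YS, Matrix.cons_val_zero, Matrix.cons_val_one, Matrix.head_cons,
    Set.mem_setOf_eq] at h1 h2
  rcases mul_nonpos_iff.mp h1 with ⟨c1, c2⟩ | ⟨c1, c2⟩ <;>
    rcases mul_pos_iff.mp h2 with ⟨d1, d2⟩ | ⟨d1, d2⟩ <;>
    first
      | linarith
      | exact v.2 (vec_zero _ (by linarith) (by linarith))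
      | nlinarith

lemma hXdisj : Pairwise (Function.onFun Disjoint XS) := by
  intro i j hij
  fin_cases i <;> fin_cases j <;> simp_all <;>
    first
      | exact disj_X0_X1
      | exact disj_X0_X1.symm

lemma hYdisj : Pairwise (Function.onFun Disjoint YS) := by
  intro i j hij
  fin_cases i <;> fin_cases j <;> simp_all <;>
    first
      | exact disj_Y0_Y1
      | exact disj_Y0_Y1.symm

lemma hXYdisj : ∀ i j, Disjoint (XS i) (YS j) := by
  intro i j
  fin_cases i <;> fin_cases j
  · exact disj_X0_Y0
  · exact disj_X0_Y1
  · exact disj_X1_Y0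
  · exact disj_X1_Y1

lemma A1_coe : (A1 : Matrix (Fin 2) (Fin 2) ℝ) = !![5/4, -1; -4, 4] := rfl

lemma A2_coe : (A2 : Matrix (Fin 2) (Fin 2) ℝ) = !![1/4, -1/4; -1, 5] := rfl

lemma A1_inv_coe : ((A1⁻¹ : GL (Fin 2) ℝ) : Matrix (Fin 2) (Fin 2) ℝ) = !![4, 1; 4, 5/4] := rfl

lemma A2_inv_coe : ((A2⁻¹ : GL (Fin 2) ℝ) : Matrix (Fin 2) (Fin 2) ℝ) = !![5, 1/4; 1, 1/4] := rfl

lemma mulVec_entries (M : Matrix (Fin 2) (Fin 2) ℝ) (v : Fin 2 → ℝ) :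
    (M *ᵥ v) 0 = M 0 0 * v 0 + M 0 1 * v 1 ∧
    (M *ᵥ v) 1 = M 1 0 * v 0 + M 1 1 * v 1 := by
  constructor <;> simp [Matrix.mulVec, dotProduct, Fin.sum_univ_two]

lemma hX0 : (![A1, A2] : Fin 2 → GL (Fin 2) ℝ) 0 • (YS 0)ᶜ ⊆ XS 0 := by
  rintro w hw
  rw [Set.mem_smul_set] at hw
  obtain ⟨v, hv, rfl⟩ := hw
  have hv' : ¬ (0 < (5 * v.1 1 - 4 * v.1 0) * (3 * v.1 0 - v.1 1)) := hv
  rw [not_lt] at hv'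
  show (0:ℝ) ≤ (7 * ((![A1, A2] : Fin 2 → GL (Fin 2) ℝ) 0 • v).1 1 +
      32 * ((![A1, A2] : Fin 2 → GL (Fin 2) ℝ) 0 • v).1 0) *
      (-16 * ((![A1, A2] : Fin 2 → GL (Fin 2) ℝ) 0 • v).1 0 -
       9 * ((![A1, A2] : Fin 2 → GL (Fin 2) ℝ) 0 • v).1 1)
  have hc : (![A1, A2] : Fin 2 → GL (Fin 2) ℝ) 0 = A1 := rfl
  rw [hc, smul_coe, A1_coe]
  obtain ⟨e0, e1⟩ := mulVec_entries !![5/4, -1; -4, 4] v.1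
  rw [e0, e1]
  norm_num
  nlinarith [hv']

lemma hX1 : (![A1, A2] : Fin 2 → GL (Fin 2) ℝ) 1 • (YS 1)ᶜ ⊆ XS 1 := by
  rintro w hw
  rw [Set.mem_smul_set] at hw
  obtain ⟨v, hv, rfl⟩ := hw
  have hv' : ¬ (0 < (20 * v.1 1 + v.1 0) * (3 * v.1 0 - 5 * v.1 1)) := hv
  rw [not_lt] at hv'
  show (21 * ((![A1, A2] : Fin 2 → GL (Fin 2) ℝ) 1 • v).1 1 +
      100 * ((![A1, A2] : Fin 2 → GL (Fin 2) ℝ) 1 • v).1 0) *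
      (20 * ((![A1, A2] : Fin 2 → GL (Fin 2) ℝ) 1 • v).1 0 -
       ((![A1, A2] : Fin 2 → GL (Fin 2) ℝ) 1 • v).1 1) ≤ 0
  have hc : (![A1, A2] : Fin 2 → GL (Fin 2) ℝ) 1 = A2 := rfl
  rw [hc, smul_coe, A2_coe]
  obtain ⟨e0, e1⟩ := mulVec_entries !![1/4, -1/4; -1, 5] v.1
  rw [e0, e1]
  norm_num
  nlinarith [hv']

lemma hY0 : ((![A1, A2] : Fin 2 → GL (Fin 2) ℝ))⁻¹ 0 • (XS 0)ᶜ ⊆ YS 0 := by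
  rintro w hw
  rw [Set.mem_smul_set] at hw
  obtain ⟨v, hv, rfl⟩ := hw
  have hv' : ¬ ((0:ℝ) ≤ (7 * v.1 1 + 32 * v.1 0) * (-16 * v.1 0 - 9 * v.1 1)) := hv
  rw [not_le] at hv'
  show (0:ℝ) < (5 * (((![A1, A2] : Fin 2 → GL (Fin 2) ℝ))⁻¹ 0 • v).1 1 -
      4 * (((![A1, A2] : Fin 2 → GL (Fin 2) ℝ))⁻¹ 0 • v).1 0) *
      (3 * (((![A1, A2] : Fin 2 → GL (Fin 2) ℝ))⁻¹ 0 • v).1 0 -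
       (((![A1, A2] : Fin 2 → GL (Fin 2) ℝ))⁻¹ 0 • v).1 1)
  have hc : ((![A1, A2] : Fin 2 → GL (Fin 2) ℝ))⁻¹ 0 = A1⁻¹ := rfl
  rw [hc, smul_coe, A1_inv_coe]
  obtain ⟨e0, e1⟩ := mulVec_entries !![4, 1; 4, 5/4] v.1
  rw [e0, e1]
  norm_num
  nlinarith [hv']

lemma hY1 : ((![A1, A2] : Fin 2 → GL (Fin 2) ℝ))⁻¹ 1 • (XS 1)ᶜ ⊆ YS 1 := by
  rintro w hw
  rw [Set.mem_smul_set] at hw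
  obtain ⟨v, hv, rfl⟩ := hw
  have hv' : ¬ ((21 * v.1 1 + 100 * v.1 0) * (20 * v.1 0 - v.1 1) ≤ 0) := hv
  rw [not_le] at hv'
  show (0:ℝ) < (20 * (((![A1, A2] : Fin 2 → GL (Fin 2) ℝ))⁻¹ 1 • v).1 1 +
      (((![A1, A2] : Fin 2 → GL (Fin 2) ℝ))⁻¹ 1 • v).1 0) *
      (3 * (((![A1, A2] : Fin 2 → GL (Fin 2) ℝ))⁻¹ 1 • v).1 0 -
       5 * (((![A1, A2] : Fin 2 → GL (Fin 2) ℝ))⁻¹ 1 • v).1 1)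
  have hc : ((![A1, A2] : Fin 2 → GL (Fin 2) ℝ))⁻¹ 1 = A2⁻¹ := rfl
  rw [hc, smul_coe, A2_inv_coe]
  obtain ⟨e0, e1⟩ := mulVec_entries !![5, 1/4; 1, 1/4] v.1
  rw [e0, e1]
  norm_num
  nlinarith [hv']

lemma hX : ∀ i, (![A1, A2] : Fin 2 → GL (Fin 2) ℝ) i • (YS i)ᶜ ⊆ XS i := by
  intro i
  fin_cases i
  · exact hX0
  · exact hX1

lemma hY : ∀ i, (![A1, A2] : Fin 2 → GL (Fin 2) ℝ)⁻¹ i • (XS i)ᶜ ⊆ YS i := by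
  intro i
  fin_cases i
  · exact hY0
  · exact hY1

lemma inj_lift_matrices : Function.Injective (FreeGroup.lift ![A1, A2]) :=
  FreeGroup.injective_lift_of_ping_pong ![A1, A2] XS YS hXne hXdisj hYdisj hXYdisj hX hY

/-! ### Conjugation identities in `B3` -/

lemma c_s0_a1 : b3 0 * a₁ * (b3 0)⁻¹ = a₂ := by
  simp only [a₁, a₂]; group

lemma c_s0_a2 : b3 0 * a₂ * (b3 0)⁻¹ = a₁⁻¹ * a₂ := by
  simp only [a₁, a₂]; exact I2 braid_rel

lemma c_s0i_a1 : (b3 0)⁻¹ * a₁ * ((b3 0)⁻¹)⁻¹ = a₁ * a₂⁻¹ := by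
  rw [inv_inv]; simp only [a₁, a₂]; exact I1 braid_rel

lemma c_s0i_a2 : (b3 0)⁻¹ * a₂ * ((b3 0)⁻¹)⁻¹ = a₁ := by
  simp only [a₁, a₂]; group

lemma c_s1_a1 : b3 1 * a₁ * (b3 1)⁻¹ = a₂ := by
  simp only [a₁, a₂]; group

lemma c_s1_a2 : b3 1 * a₂ * (b3 1)⁻¹ = a₂ * a₁⁻¹ := by
  simp only [a₁, a₂]; exact I3 braid_rel

lemma c_s1i_a1 : (b3 1)⁻¹ * a₁ * ((b3 1)⁻¹)⁻¹ = a₂⁻¹ * a₁ := by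
  rw [inv_inv]; simp only [a₁, a₂]; exact I4 braid_rel

lemma c_s1i_a2 : (b3 1)⁻¹ * a₂ * ((b3 1)⁻¹)⁻¹ = a₁ := by
  simp only [a₁, a₂]; group

lemma a1_mem : a₁ ∈ N3 := Subgroup.subset_closure (Set.mem_insert _ _)

lemma a2_mem : a₂ ∈ N3 := Subgroup.subset_closure (Set.mem_insert_of_mem _ rfl)

lemma conj_mem (g : B3) (h1 : g * a₁ * g⁻¹ ∈ N3) (h2 : g * a₂ * g⁻¹ ∈ N3) :
    ∀ n ∈ N3, g * n * g⁻¹ ∈ N3 := by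
  intro n hn
  refine Subgroup.closure_induction (p := fun n _ => g * n * g⁻¹ ∈ N3) ?_ ?_ ?_ ?_ hn
  · intro x hx
    rcases hx with rfl | hx
    · exact h1
    · rcases hx with rfl
      exact h2
  · simpa using one_mem N3
  · intro x y _ _ px py
    have hxy : g * (x * y) * g⁻¹ = (g * x * g⁻¹) * (g * y * g⁻¹) := by group
    rw [hxy]; exact mul_mem px py
  · intro x _ px
    have hxi : g * x⁻¹ * g⁻¹ = (g * x * g⁻¹)⁻¹ := by group
    rw [hxi]; exact inv_mem px

lemma mem_norm_of (g : B3) (hg : ∀ n ∈ N3, g * n * g⁻¹ ∈ N3)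
    (hg' : ∀ n ∈ N3, g⁻¹ * n * g⁻¹⁻¹ ∈ N3) : g ∈ Subgroup.normalizer (N3 : Set B3) := by
  rw [Subgroup.mem_normalizer_iff]
  intro n
  constructor
  · exact fun hn => hg n hn
  · intro hn
    have := hg' _ hn
    rwa [show g⁻¹ * (g * n * g⁻¹) * g⁻¹⁻¹ = n by group] at this

lemma b3_mem_normalizer (i : Fin 2) : b3 i ∈ Subgroup.normalizer (N3 : Set B3) := by
  have k0 : ∀ n ∈ N3, b3 0 * n * (b3 0)⁻¹ ∈ N3 :=
    conj_mem _ (by rw [c_s0_a1]; exact a2_mem)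
      (by rw [c_s0_a2]; exact mul_mem (inv_mem a1_mem) a2_mem)
  have k0i : ∀ n ∈ N3, (b3 0)⁻¹ * n * ((b3 0)⁻¹)⁻¹ ∈ N3 :=
    conj_mem _ (by rw [c_s0i_a1]; exact mul_mem a1_mem (inv_mem a2_mem))
      (by rw [c_s0i_a2]; exact a1_mem)
  have k1 : ∀ n ∈ N3, b3 1 * n * (b3 1)⁻¹ ∈ N3 :=
    conj_mem _ (by rw [c_s1_a1]; exact a2_mem)
      (by rw [c_s1_a2]; exact mul_mem a2_mem (inv_mem a1_mem))
  have k1i : ∀ n ∈ N3, (b3 1)⁻¹ * n * ((b3 1)⁻¹)⁻¹ ∈ N3 :=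
    conj_mem _ (by rw [c_s1i_a1]; exact mul_mem (inv_mem a2_mem) a1_mem)
      (by rw [c_s1i_a2]; exact a1_mem)
  fin_cases i
  · exact mem_norm_of (b3 0) k0 k0i
  · exact mem_norm_of (b3 1) k1 k1i

lemma N3_normal : N3.Normal := by
  rw [← Subgroup.normalizer_eq_top_iff, eq_top_iff,
    ← PresentedGroup.closure_range_of (braidRels (3 - 1))]
  refine (Subgroup.closure_le _).mpr ?_
  rintro x ⟨i, rfl⟩
  exact b3_mem_normalizer i

end N3Aux

theorem N3_normal_and_free :
    N3.Normal ∧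
      ∃ e : ↥N3 ≃* FreeGroup (Fin 2),
        e ⟨a₁, Subgroup.subset_closure (Set.mem_insert _ _)⟩ = FreeGroup.of 0 ∧
        e ⟨a₂, Subgroup.subset_closure (Set.mem_insert_of_mem _ rfl)⟩ = FreeGroup.of 1 := by
  classical
  refine ⟨N3Aux.N3_normal, ?_⟩
  have hcomp : N3Aux.S.comp (FreeGroup.lift ![a₁, a₂]) = FreeGroup.lift ![N3Aux.A1, N3Aux.A2] := by
    apply FreeGroup.ext_hom
    intro i
    fin_cases i <;>
      simp [MonoidHom.comp_apply, N3Aux.S_a₁, N3Aux.S_a₂]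
  have hinj : Function.Injective (FreeGroup.lift ![a₁, a₂]) := by
    have h2 : Function.Injective (N3Aux.S.comp (FreeGroup.lift ![a₁, a₂])) := by
      rw [hcomp]; exact N3Aux.inj_lift_matrices
    intro x y hxy
    exact h2 (by simp [MonoidHom.comp_apply, hxy])
  have hrange : (FreeGroup.lift ![a₁, a₂]).range = N3 := by
    rw [FreeGroup.range_lift_eq_closure]
    have : Set.range ![a₁, a₂] = {a₁, a₂} := by
      ext z
      simp only [Set.mem_range, Fin.exists_fin_two, Matrix.cons_val_zero, Matrix.cons_val_one,
        Matrix.head_cons, Set.mem_insert_iff, Set.mem_singleton_iff, eq_comm]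
    rw [this]
    rfl
  refine ⟨(MulEquiv.subgroupCongr hrange.symm).trans (MonoidHom.ofInjective hinj).symm, ?_, ?_⟩
  · rw [MulEquiv.trans_apply, MulEquiv.symm_apply_eq]
    refine Subtype.ext ?_
    rw [MonoidHom.ofInjective_apply, MulEquiv.subgroupCongr_apply]
    simp
  · rw [MulEquiv.trans_apply, MulEquiv.symm_apply_eq]
    refine Subtype.ext ?_
    rw [MonoidHom.ofInjective_apply, MulEquiv.subgroupCongr_apply]
    simp
end

section
/- Let t₀ be a real root of the polynomial t³ - 2t² + t - 1 (this polynomial has exactly one real root). Then (3-√5)/2 < t₀ < (3+√5)/2, the (2,1) entry of S_{t₀}(σ₂⁻²σ₁σ₂⁻¹) equals 0, and the Burau specialization S_{t₀} : B₃ → GL₂(ℝ) is not injective. -/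
open Matrix
open scoped MatrixGroups

/-! ### Auxiliary lemmas -/

/-- If `↑u * Y = 1` then the matrix of `u⁻¹` is `Y`. -/
lemma coe_inv_of_aux (u : GL (Fin 2) ℝ) {Y : Matrix (Fin 2) (Fin 2) ℝ}
    (h1 : (u : Matrix (Fin 2) (Fin 2) ℝ) * Y = 1) :
    ((u⁻¹ : GL (Fin 2) ℝ) : Matrix (Fin 2) (Fin 2) ℝ) = Y := by
  have h2 : ((u⁻¹ : GL (Fin 2) ℝ) : Matrix (Fin 2) (Fin 2) ℝ)
      * (u : Matrix (Fin 2) (Fin 2) ℝ) = 1 := by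
    rw [← Units.val_mul, inv_mul_cancel, Units.val_one]
  calc ((u⁻¹ : GL (Fin 2) ℝ) : Matrix (Fin 2) (Fin 2) ℝ)
      = ↑u⁻¹ * ((u : Matrix (Fin 2) (Fin 2) ℝ) * Y) := by rw [h1, mul_one]
    _ = (↑u⁻¹ * (u : Matrix (Fin 2) (Fin 2) ℝ)) * Y := by rw [mul_assoc]
    _ = Y := by rw [h2, one_mul]

lemma upper_mul_aux (X Y : Matrix (Fin 2) (Fin 2) ℝ) (hX : X 1 0 = 0) (hY : Y 1 0 = 0) :
    (X * Y) 1 0 = 0 := by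
  simp [Matrix.mul_apply, Fin.sum_univ_two, hX, hY]

lemma mul00_aux (X Y : Matrix (Fin 2) (Fin 2) ℝ) (hY : Y 1 0 = 0) :
    (X * Y) 0 0 = X 0 0 * Y 0 0 := by
  simp [Matrix.mul_apply, Fin.sum_univ_two, hY]

lemma mul11_aux (X Y : Matrix (Fin 2) (Fin 2) ℝ) (hX : X 1 0 = 0) :
    (X * Y) 1 1 = X 1 1 * Y 1 1 := by
  simp [Matrix.mul_apply, Fin.sum_univ_two, hX]

/-- The inverse of an upper triangular element of `GL₂(ℝ)` is upper triangular. -/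
lemma inv_upper_aux (u : GL (Fin 2) ℝ) (h : (u : Matrix (Fin 2) (Fin 2) ℝ) 1 0 = 0) :
    ((u⁻¹ : GL (Fin 2) ℝ) : Matrix (Fin 2) (Fin 2) ℝ) 1 0 = 0 := by
  set X := (u : Matrix (Fin 2) (Fin 2) ℝ) with hXdef
  set X' := ((u⁻¹ : GL (Fin 2) ℝ) : Matrix (Fin 2) (Fin 2) ℝ) with hX'def
  have hXX' : X * X' = 1 := by rw [hXdef, hX'def, ← Units.val_mul, mul_inv_cancel, Units.val_one]
  have hX'X : X' * X = 1 := by rw [hXdef, hX'def, ← Units.val_mul, inv_mul_cancel, Units.val_one]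
  have hdet : X.det * X'.det = 1 := by rw [← Matrix.det_mul, hXX', Matrix.det_one]
  have hX00 : X 0 0 ≠ 0 := by
    intro h0
    rw [Matrix.det_fin_two, h0, h] at hdet
    simp at hdet
  have h10 : (X' * X) 1 0 = 0 := by rw [hX'X]; simp [Matrix.one_apply]
  rw [Matrix.mul_apply, Fin.sum_univ_two, h, mul_zero, add_zero] at h10
  exact (mul_eq_zero.mp h10).resolve_right hX00

/-- The commutator of two upper triangular elements of `GL₂(ℝ)` is unipotent upper
triangular. -/
lemma comm_unip_aux (u v : GL (Fin 2) ℝ)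
    (hu : (u : Matrix (Fin 2) (Fin 2) ℝ) 1 0 = 0)
    (hv : (v : Matrix (Fin 2) (Fin 2) ℝ) 1 0 = 0) :
    ((u * v * u⁻¹ * v⁻¹ : GL (Fin 2) ℝ) : Matrix (Fin 2) (Fin 2) ℝ) 1 0 = 0 ∧
    ((u * v * u⁻¹ * v⁻¹ : GL (Fin 2) ℝ) : Matrix (Fin 2) (Fin 2) ℝ) 0 0 = 1 ∧
    ((u * v * u⁻¹ * v⁻¹ : GL (Fin 2) ℝ) : Matrix (Fin 2) (Fin 2) ℝ) 1 1 = 1 := by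
  have hu' : ((u⁻¹ : GL (Fin 2) ℝ) : Matrix (Fin 2) (Fin 2) ℝ) 1 0 = 0 := inv_upper_aux u hu
  have hv' : ((v⁻¹ : GL (Fin 2) ℝ) : Matrix (Fin 2) (Fin 2) ℝ) 1 0 = 0 := inv_upper_aux v hv
  set X := (u : Matrix (Fin 2) (Fin 2) ℝ)
  set Y := (v : Matrix (Fin 2) (Fin 2) ℝ)
  set X' := ((u⁻¹ : GL (Fin 2) ℝ) : Matrix (Fin 2) (Fin 2) ℝ)
  set Y' := ((v⁻¹ : GL (Fin 2) ℝ) : Matrix (Fin 2) (Fin 2) ℝ)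
  have hc : ((u * v * u⁻¹ * v⁻¹ : GL (Fin 2) ℝ) : Matrix (Fin 2) (Fin 2) ℝ)
      = X * Y * X' * Y' := by simp only [Units.val_mul]; rfl
  have hXX' : X * X' = 1 := by rw [← Units.val_mul, mul_inv_cancel, Units.val_one]
  have hYY' : Y * Y' = 1 := by rw [← Units.val_mul, mul_inv_cancel, Units.val_one]
  have hXd0 : X 0 0 * X' 0 0 = 1 := by
    have := mul00_aux X X' hu'; rw [hXX'] at this
    simpa [Matrix.one_apply] using this.symm
  have hYd0 : Y 0 0 * Y' 0 0 = 1 := by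
    have := mul00_aux Y Y' hv'; rw [hYY'] at this
    simpa [Matrix.one_apply] using this.symm
  have hXd1 : X 1 1 * X' 1 1 = 1 := by
    have := mul11_aux X X' hu; rw [hXX'] at this
    simpa [Matrix.one_apply] using this.symm
  have hYd1 : Y 1 1 * Y' 1 1 = 1 := by
    have := mul11_aux Y Y' hv; rw [hYY'] at this
    simpa [Matrix.one_apply] using this.symm
  refine ⟨?_, ?_, ?_⟩
  · rw [hc]
    exact upper_mul_aux _ _ (upper_mul_aux _ _ (upper_mul_aux _ _ hu hv) hu') hv'
  · rw [hc, mul00_aux _ _ hv', mul00_aux _ _ hu', mul00_aux _ _ hv]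
    nlinarith [hXd0, hYd0]
  · rw [hc, mul11_aux _ _ (upper_mul_aux _ _ (upper_mul_aux _ _ hu hv) hu'),
      mul11_aux _ _ (upper_mul_aux _ _ hu hv), mul11_aux _ _ hu]
    nlinarith [hXd1, hYd1]

/-- Two unipotent upper triangular elements of `GL₂(ℝ)` commute. -/
lemma unip_comm_aux (x y : GL (Fin 2) ℝ)
    (hx0 : (x : Matrix (Fin 2) (Fin 2) ℝ) 1 0 = 0)
    (hx1 : (x : Matrix (Fin 2) (Fin 2) ℝ) 0 0 = 1)
    (hx2 : (x : Matrix (Fin 2) (Fin 2) ℝ) 1 1 = 1)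
    (hy0 : (y : Matrix (Fin 2) (Fin 2) ℝ) 1 0 = 0)
    (hy1 : (y : Matrix (Fin 2) (Fin 2) ℝ) 0 0 = 1)
    (hy2 : (y : Matrix (Fin 2) (Fin 2) ℝ) 1 1 = 1) :
    x * y = y * x := by
  apply Units.ext
  rw [Units.val_mul, Units.val_mul]
  ext i j
  fin_cases i <;> fin_cases j <;>
    simp [Matrix.mul_apply, Fin.sum_univ_two, hx0, hx1, hx2, hy0, hy1, hy2] <;> ring

/-! ### A distinguishing representation (Burau at `t = -1`) -/

def F0 : GL (Fin 2) ℝ :=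
  ⟨!![1, 1; 0, 1], !![1, -1; 0, 1],
    by ext i j; fin_cases i <;> fin_cases j <;> norm_num [Matrix.mul_apply, Fin.sum_univ_two, Matrix.one_apply],
    by ext i j; fin_cases i <;> fin_cases j <;> norm_num [Matrix.mul_apply, Fin.sum_univ_two, Matrix.one_apply]⟩

def F1 : GL (Fin 2) ℝ :=
  ⟨!![1, 0; -1, 1], !![1, 0; 1, 1],
    by ext i j; fin_cases i <;> fin_cases j <;> norm_num [Matrix.mul_apply, Fin.sum_univ_two, Matrix.one_apply],
    by ext i j; fin_cases i <;> fin_cases j <;> norm_num [Matrix.mul_apply, Fin.sum_univ_two, Matrix.one_apply]⟩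

lemma F0_val : (F0 : Matrix (Fin 2) (Fin 2) ℝ) = !![1, 1; 0, 1] := rfl
lemma F1_val : (F1 : Matrix (Fin 2) (Fin 2) ℝ) = !![1, 0; -1, 1] := rfl

def fgen : Fin (3 - 1) → GL (Fin 2) ℝ := ![F0, F1]

lemma hbraid : ∀ r ∈ braidRels (3 - 1), FreeGroup.lift fgen r = 1 := by
  rintro r (⟨i, j, hij, rfl⟩ | ⟨i, j, hij, rfl⟩)
  · have hiv : (i : ℕ) = 0 := by have := i.isLt; have := j.isLt; omega
    have hjv : (j : ℕ) = 1 := by have := i.isLt; have := j.isLt; omega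
    have hi : i = 0 := Fin.ext (by simp [hiv])
    have hj : j = 1 := Fin.ext (by simp [hjv])
    subst hi; subst hj
    simp only [_root_.map_mul, _root_.map_inv, FreeGroup.lift_apply_of]
    rw [mul_inv_eq_one]
    have e0 : fgen 0 = F0 := rfl
    have e1 : fgen 1 = F1 := rfl
    rw [e0, e1]
    apply Units.ext
    simp only [Units.val_mul, F0_val, F1_val]
    ext i j
    fin_cases i <;> fin_cases j <;> norm_num [Matrix.mul_apply, Fin.sum_univ_two]
  · exfalso; have := i.isLt; have := j.isLt; omega

def rho : B3 →* GL (Fin 2) ℝ := PresentedGroup.toGroup hbraid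

lemma rho_of (i : Fin 2) : rho (b3 i) = fgen i := PresentedGroup.toGroup.of hbraid

set_option maxHeartbeats 2000000 in
theorem burau_B3_unfaithful_cubic_root (t₀ : ℝ)
    (hroot : t₀ ^ 3 - 2 * t₀ ^ 2 + t₀ - 1 = 0)
    (S : B3 →* GL (Fin 2) ℝ) (hS : IsBurau3 t₀ S) :
    (∃! s : ℝ, s ^ 3 - 2 * s ^ 2 + s - 1 = 0) ∧
      ((3 - Real.sqrt 5) / 2 < t₀ ∧ t₀ < (3 + Real.sqrt 5) / 2) ∧
      (S ((b3 1) ^ (-2 : ℤ) * b3 0 * (b3 1)⁻¹) : Matrix (Fin 2) (Fin 2) ℝ) 1 0 = 0 ∧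
      ¬ Function.Injective S := by
  obtain ⟨hA, hB⟩ := hS
  -- basic bounds for any root of the cubic
  have hbound : ∀ x : ℝ, x ^ 3 - 2 * x ^ 2 + x - 1 = 0 → 4/3 < x ∧ x < 2 := by
    intro x hx
    constructor
    · nlinarith [sq_nonneg (x - 1/3), sq_nonneg x]
    · nlinarith [sq_nonneg x]
  obtain ⟨ht₀l, ht₀u⟩ := hbound t₀ hroot
  have hsqrt5 : (1 : ℝ) < Real.sqrt 5 := by
    nlinarith [Real.sq_sqrt (show (0:ℝ) ≤ 5 by norm_num), Real.sqrt_nonneg 5]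
  -- the word g and its image
  set g : B3 := (b3 1) ^ (-2 : ℤ) * b3 0 * (b3 1)⁻¹ with hgdef
  have hts : t₀ * (t₀ ^ 2 - 2 * t₀ + 1) = 1 := by linear_combination hroot
  have hβ' : (((S (b3 1))⁻¹ : GL (Fin 2) ℝ) : Matrix (Fin 2) (Fin 2) ℝ)
      = !![1, 0; 1, -(t₀ ^ 2 - 2 * t₀ + 1)] := by
    apply coe_inv_of_aux
    rw [hB]
    ext i j
    fin_cases i <;> fin_cases j <;>
      simp [Matrix.mul_apply, Fin.sum_univ_two, Matrix.one_apply] <;>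
      linear_combination hroot
  have hgrw : g = (b3 1)⁻¹ * ((b3 1)⁻¹ * (b3 0 * (b3 1)⁻¹)) := by rw [hgdef]; group
  have hΓ : ((S g) : Matrix (Fin 2) (Fin 2) ℝ)
      = !![1, 0; 1, -(t₀ ^ 2 - 2 * t₀ + 1)] *
        (!![1, 0; 1, -(t₀ ^ 2 - 2 * t₀ + 1)] *
          (!![-t₀, 1; 0, 1] * !![1, 0; 1, -(t₀ ^ 2 - 2 * t₀ + 1)])) := by
    rw [hgrw, _root_.map_mul, _root_.map_mul, _root_.map_mul, _root_.map_inv, Units.val_mul, Units.val_mul, Units.val_mul,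
      hβ', hA]
  have hΓ10 : ((S g) : Matrix (Fin 2) (Fin 2) ℝ) 1 0 = 0 := by
    rw [hΓ]
    simp [Matrix.mul_apply, Fin.sum_univ_two]
    linear_combination (t₀ - 1) * hroot
  -- the two commutators
  set u : B3 := b3 0 * g * (b3 0)⁻¹ * g⁻¹ with hudef
  set v : B3 := b3 0 * g ^ 2 * (b3 0)⁻¹ * (g ^ 2)⁻¹ with hvdef
  have hα10 : ((S (b3 0)) : Matrix (Fin 2) (Fin 2) ℝ) 1 0 = 0 := by rw [hA]; simp
  have hΓ210 : ((S (g ^ 2)) : Matrix (Fin 2) (Fin 2) ℝ) 1 0 = 0 := by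
    rw [pow_two, _root_.map_mul, Units.val_mul]
    exact upper_mul_aux _ _ hΓ10 hΓ10
  have hSu : S u = S (b3 0) * S g * (S (b3 0))⁻¹ * (S g)⁻¹ := by
    rw [hudef]; simp [_root_.map_mul, _root_.map_inv]
  have hSv : S v = S (b3 0) * S (g ^ 2) * (S (b3 0))⁻¹ * (S (g ^ 2))⁻¹ := by
    rw [hvdef]; simp [_root_.map_mul, _root_.map_inv]
  obtain ⟨hu0, hu1, hu2⟩ := comm_unip_aux (S (b3 0)) (S g) hα10 hΓ10
  obtain ⟨hv0, hv1, hv2⟩ := comm_unip_aux (S (b3 0)) (S (g ^ 2)) hα10 hΓ210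
  rw [← hSu] at hu0 hu1 hu2
  rw [← hSv] at hv0 hv1 hv2
  have hcomm : S u * S v = S v * S u := unip_comm_aux _ _ hu0 hu1 hu2 hv0 hv1 hv2
  -- images under rho
  have r0 : ((rho (b3 0)) : Matrix (Fin 2) (Fin 2) ℝ) = !![1, 1; 0, 1] := by
    rw [rho_of]; rfl
  have r1i : (((rho (b3 1))⁻¹ : GL (Fin 2) ℝ) : Matrix (Fin 2) (Fin 2) ℝ) = !![1, 0; 1, 1] := by
    apply coe_inv_of_aux
    rw [rho_of]
    show (!![1, 0; -1, 1] : Matrix (Fin 2) (Fin 2) ℝ) * _ = 1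
    ext i j
    fin_cases i <;> fin_cases j <;> norm_num [Matrix.mul_apply, Fin.sum_univ_two, Matrix.one_apply]
  have r0i : (((rho (b3 0))⁻¹ : GL (Fin 2) ℝ) : Matrix (Fin 2) (Fin 2) ℝ) = !![1, -1; 0, 1] := by
    apply coe_inv_of_aux
    rw [r0]
    ext i j
    fin_cases i <;> fin_cases j <;> norm_num [Matrix.mul_apply, Fin.sum_univ_two, Matrix.one_apply]
  have rg : ((rho g) : Matrix (Fin 2) (Fin 2) ℝ) = !![2, 1; 5, 3] := by
    rw [hgrw, _root_.map_mul, _root_.map_mul, _root_.map_mul, _root_.map_inv, Units.val_mul, Units.val_mul, Units.val_mul,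
      r1i, r0]
    ext i j
    fin_cases i <;> fin_cases j <;> norm_num [Matrix.mul_apply, Fin.sum_univ_two]
  have rgi : (((rho g)⁻¹ : GL (Fin 2) ℝ) : Matrix (Fin 2) (Fin 2) ℝ) = !![3, -1; -5, 2] := by
    apply coe_inv_of_aux
    rw [rg]
    ext i j
    fin_cases i <;> fin_cases j <;> norm_num [Matrix.mul_apply, Fin.sum_univ_two, Matrix.one_apply]
  have rg2 : ((rho (g ^ 2)) : Matrix (Fin 2) (Fin 2) ℝ) = !![9, 5; 25, 14] := by
    rw [pow_two, _root_.map_mul, Units.val_mul, rg]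
    ext i j
    fin_cases i <;> fin_cases j <;> norm_num [Matrix.mul_apply, Fin.sum_univ_two]
  have rg2i : (((rho (g ^ 2))⁻¹ : GL (Fin 2) ℝ) : Matrix (Fin 2) (Fin 2) ℝ)
      = !![14, -5; -25, 9] := by
    apply coe_inv_of_aux
    rw [rg2]
    ext i j
    fin_cases i <;> fin_cases j <;> norm_num [Matrix.mul_apply, Fin.sum_univ_two, Matrix.one_apply]
  have ru : ((rho u) : Matrix (Fin 2) (Fin 2) ℝ) = !![36, -13; 25, -9] := by
    rw [hudef, _root_.map_mul, _root_.map_mul, _root_.map_mul, _root_.map_inv, _root_.map_inv, Units.val_mul, Units.val_mul,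
      Units.val_mul, r0, rg, r0i, rgi]
    ext i j
    fin_cases i <;> fin_cases j <;> norm_num [Matrix.mul_apply, Fin.sum_univ_two]
  have rv : ((rho v) : Matrix (Fin 2) (Fin 2) ℝ) = !![851, -305; 625, -224] := by
    rw [hvdef, _root_.map_mul, _root_.map_mul, _root_.map_mul, _root_.map_inv, _root_.map_inv, Units.val_mul, Units.val_mul,
      Units.val_mul, r0, rg2, r0i, rg2i]
    ext i j
    fin_cases i <;> fin_cases j <;> norm_num [Matrix.mul_apply, Fin.sum_univ_two]
  refine ⟨⟨t₀, hroot, ?_⟩, ⟨by nlinarith, by nlinarith⟩, hΓ10, ?_⟩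
  · -- uniqueness of the real root
    intro s hs
    obtain ⟨hsl, hsu⟩ := hbound s hs
    have key : (s - t₀) * (s ^ 2 + s * t₀ + t₀ ^ 2 - 2 * s - 2 * t₀ + 1) = 0 := by
      linear_combination hs - hroot
    have hq : 0 < s ^ 2 + s * t₀ + t₀ ^ 2 - 2 * s - 2 * t₀ + 1 := by
      nlinarith [mul_pos (show (0:ℝ) < s - 4/3 by linarith) (show (0:ℝ) < t₀ - 4/3 by linarith),
        sq_nonneg (s - 4/3), sq_nonneg (t₀ - 4/3)]
    have : s - t₀ = 0 := by
      rcases mul_eq_zero.mp key with h | h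
      · exact h
      · linarith
    linarith
  · -- non-injectivity
    intro hinj
    have heq : u * v = v * u := hinj (by rw [_root_.map_mul S u v, _root_.map_mul S v u, hcomm])
    have hρ : ((rho (u * v)) : Matrix (Fin 2) (Fin 2) ℝ) 1 0
        = ((rho (v * u)) : Matrix (Fin 2) (Fin 2) ℝ) 1 0 := by rw [heq]
    rw [show rho (u*v) = rho u * rho v from _root_.map_mul rho u v,
      show rho (v*u) = rho v * rho u from _root_.map_mul rho v u,
      Units.val_mul, Units.val_mul, ru, rv] at hρ
    norm_num [Matrix.mul_apply, Fin.sum_univ_two] at hρ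
end
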